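/- arXiv:2407.07442 — 8 statements merged into one kernel-verified Lean document; each statement's English description precedes it below -/
import Mathlib

section
/- Let (Γ₀, <), …, (Γ_{n−1}, <) be well-ordered sets and let L be an initial segment (lower set) of the product ∏_{i<n} Γ_i with the product partial order. Then for each i there exists a finite segmentation 𝒮_i of Γ_i (a finite partition into order-convex sets) such that the partition ⨂_i 𝒮_i of the product refines the two-element partition {L, (∏_{i<n} Γ_i) \ L}. -/
/-- Basic segmentation lemma: given well-ordered sets `Γ i` and a lower set `L` of the
product (with the product order), there are finite segmentations `σ i` of the `Γ i`
(finite partitions into order-convex pieces, encoded as maps to `Fin (k i)` with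
order-convex fibers) whose product partition refines `{L, Lᶜ}`. -/
theorem basic_segmentation {n : ℕ} (Γ : Fin n → Type*) [∀ i, LinearOrder (Γ i)]
    [∀ i, WellFoundedLT (Γ i)] (L : Set (∀ i, Γ i)) (hL : IsLowerSet L) :
    ∃ (k : Fin n → ℕ) (σ : ∀ i, Γ i → Fin (k i)),
      (∀ i c, (σ i ⁻¹' {c}).OrdConnected) ∧
      ∀ x y : ∀ i, Γ i, (∀ i, σ i (x i) = σ i (y i)) → (x ∈ L ↔ y ∈ L) := by
  classical
  set U : Set (∀ i, Γ i) := Lᶜ with hU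
  have hUup : IsUpperSet U := hL.compl
  -- the ambient product is PWO
  have hpwo : (Set.univ : Set (∀ i, Γ i)).IsPWO := by
    simpa using Set.IsPWO.pi (s := fun i => (Set.univ : Set (Γ i))) (fun i => Set.isPWO_of_wellQuasiOrderedLE _)
  -- minimal elements of U
  set M : Set (∀ i, Γ i) := {m | m ∈ U ∧ ∀ z ∈ U, ¬ z < m} with hM
  have hManti : IsAntichain (· ≤ ·) M := by
    rintro a ⟨haU, ham⟩ b ⟨hbU, hbm⟩ hab hle
    exact hbm a haU (lt_of_le_of_ne hle hab)
  have hMfin : M.Finite := hManti.finite_of_partiallyWellOrderedOn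
    ((hpwo.mono (Set.subset_univ M)))
  -- every element of U lies above some minimal element
  have hwf : WellFounded ((· < ·) : (∀ i, Γ i) → (∀ i, Γ i) → Prop) := by
    have := hpwo.isWF
    rw [Set.isWF_univ_iff] at this
    exact this.wf
  have hmin : ∀ x ∈ U, ∃ m ∈ M, m ≤ x := by
    intro x hx
    have hne : {z | z ∈ U ∧ z ≤ x}.Nonempty := ⟨x, hx, le_rfl⟩
    obtain ⟨m, ⟨hmU, hmx⟩, hminm⟩ := hwf.has_min _ hne
    refine ⟨m, ⟨hmU, fun z hz hzm => ?_⟩, hmx⟩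
    exact hminm z ⟨hz, hzm.le.trans hmx⟩ hzm
  have hMU : M ⊆ U := fun m hm => hm.1
  haveI : Fintype ↥M := hMfin.fintype
  -- the segmentations
  let e : (↥M → Bool) ≃ Fin (Fintype.card (↥M → Bool)) := Fintype.equivFin _
  let τ : ∀ i, Γ i → (↥M → Bool) := fun i γ => fun m => decide ((m : ∀ i, Γ i) i ≤ γ)
  refine ⟨fun _ => Fintype.card (↥M → Bool), fun i γ => e (τ i γ), ?_, ?_⟩
  · intro i c
    constructor
    rintro a ha b hb z ⟨hza, hzb⟩
    simp only [Set.mem_preimage, Set.mem_singleton_iff] at ha hb ⊢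
    have hab : τ i a = τ i b := e.injective (ha.trans hb.symm)
    rw [← ha]
    congr 1
    funext m
    simp only [τ, decide_eq_decide]
    constructor
    · intro h
      by_contra hma
      have : ¬ ((m : ∀ i, Γ i) i ≤ b) := by
        have := congrFun hab m
        simp only [τ, decide_eq_decide] at this
        exact fun hb' => hma (this.mpr hb')
      exact this (h.trans hzb)
    · intro h
      exact h.trans hza
  · intro x y hxy
    have key : ∀ m ∈ M, m ≤ x ↔ m ≤ y := by
      intro m hm
      have : ∀ i, (m i ≤ x i ↔ m i ≤ y i) := by
        intro i
        have := e.injective (hxy i)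
        have h2 := congrFun this ⟨m, hm⟩
        simpa only [τ, decide_eq_decide] using h2
      constructor <;> intro h i
      · exact (this i).mp (h i)
      · exact (this i).mpr (h i)
    have hUiff : x ∈ U ↔ y ∈ U := by
      constructor <;> intro h
      · obtain ⟨m, hm, hmx⟩ := hmin x h
        exact hUup ((key m hm).mp hmx) (hMU hm)
      · obtain ⟨m, hm, hmy⟩ := hmin y h
        exact hUup ((key m hm).mpr hmy) (hMU hm)
    simpa [U, not_iff_not] using not_iff_not.mpr hUiff
end

section
/- Let (Γ₀, <), …, (Γ_{n−1}, <) be well orders, (Δ, <) a partially ordered set, f : ∏_i Γ_i → Δ an order-preserving map (with the product order on the domain), and 𝒯 a finite segmentation of Δ. Then there are finite segmentations 𝒮_i of Γ_i such that ⨂_i 𝒮_i refines the partition f*𝒯 := {f⁻¹(T) : T ∈ 𝒯}. -/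
/-- Let the `Γ i` be well orders, `Δ` a poset, `f` order preserving on the product, and
`τ` a finite segmentation of `Δ` (a map to `Fin m` with order-convex fibers). Then there
are finite segmentations `σ i` of the `Γ i` whose product partition refines the
partition `{f ⁻¹' (τ ⁻¹' {c})}`. -/
theorem segmentation_pullback {n : ℕ} (Γ : Fin n → Type*) [∀ i, LinearOrder (Γ i)]
    [∀ i, WellFoundedLT (Γ i)] {Δ : Type*} [PartialOrder Δ]
    (f : (∀ i, Γ i) → Δ) (hf : Monotone f)
    (m : ℕ) (τ : Δ → Fin m) (hτ : ∀ c, (τ ⁻¹' {c}).OrdConnected) :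
    ∃ (k : Fin n → ℕ) (σ : ∀ i, Γ i → Fin (k i)),
      (∀ i c, (σ i ⁻¹' {c}).OrdConnected) ∧
      ∀ x y : ∀ i, Γ i, (∀ i, σ i (x i) = σ i (y i)) → τ (f x) = τ (f y) := by
  classical
  set g : (∀ i, Γ i) → Fin m := fun x => τ (f x) with hgdef
  -- fibers of `g` are order-convex
  have gconv : ∀ {x z y : ∀ i, Γ i}, x ≤ z → z ≤ y → g x = g y → g z = g x := by
    intro x z y hxz hzy hxy
    have h1 : f x ∈ τ ⁻¹' {g x} := rfl
    have h2 : f y ∈ τ ⁻¹' {g x} := by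
      simp only [Set.mem_preimage, Set.mem_singleton_iff]
      exact hxy.symm
    exact (hτ (g x)).out h1 h2 ⟨hf hxz, hf hzy⟩
  -- the product is a well partial order
  have hPWO : ∀ s : Set (∀ i, Γ i), s.IsPWO := fun s => Set.isPWO_of_wellQuasiOrderedLE s
  have hwf : WellFounded ((· < ·) : (∀ i, Γ i) → (∀ i, Γ i) → Prop) :=
    (Set.isWF_univ_iff.mp (hPWO _).isWF).wf
  -- every upper set is finitely generated
  have gen : ∀ U : Set (∀ i, Γ i), (∀ a b, a ∈ U → a ≤ b → b ∈ U) →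
      ∃ s : Set (∀ i, Γ i), s.Finite ∧ ∀ z, z ∈ U ↔ ∃ u ∈ s, u ≤ z := by
    intro U hU
    refine ⟨{u | u ∈ U ∧ ∀ v ∈ U, v ≤ u → v = u}, ?_, ?_⟩
    · refine IsAntichain.finite_of_partiallyWellOrderedOn (r := (· ≤ ·)) ?_ (hPWO _)
      intro a ha b hb hne hab
      exact hne (hb.2 a ha.1 hab)
    · intro z
      constructor
      · intro hz
        obtain ⟨u, ⟨huU, huz⟩, hmin⟩ :=
          hwf.has_min {v | v ∈ U ∧ v ≤ z} ⟨z, hz, le_refl z⟩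
        refine ⟨u, ⟨huU, fun v hv hvu => ?_⟩, huz⟩
        by_contra hne
        exact hmin v ⟨hv, hvu.trans huz⟩ (lt_of_le_of_ne hvu hne)
      · rintro ⟨u, hu, huz⟩; exact hU u z hu.1 huz
  -- generators for the upper closures of the fibers
  obtain ⟨S, hSfin⟩ := Classical.axiomOfChoice (fun c : Fin m =>
    gen {z | ∃ x, g x = c ∧ x ≤ z}
      (fun a b ha hab => ⟨ha.choose, ha.choose_spec.1, ha.choose_spec.2.trans hab⟩))
  have hSfin' : ∀ c, (S c).Finite := fun c => (hSfin c).1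
  have hS' : ∀ c z, z ∈ {z | ∃ x, g x = c ∧ x ≤ z} ↔ ∃ u ∈ S c, u ≤ z := fun c => (hSfin c).2
  -- generators for the complements of the lower closures of the fibers
  obtain ⟨T, hTfin⟩ := Classical.axiomOfChoice (fun c : Fin m =>
    gen {z | ∀ y, g y = c → ¬ z ≤ y}
      (fun a b ha hab y hy hby => ha y hy (hab.trans hby)))
  have hTfin' : ∀ c, (T c).Finite := fun c => (hTfin c).1
  have hT' : ∀ c z, z ∈ {z | ∀ y, g y = c → ¬ z ≤ y} ↔ ∃ u ∈ T c, u ≤ z := fun c => (hTfin c).2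
  -- collect all generators in a finite set `G`, enumerated by `t : Fin N → _`
  set G : Set (∀ i, Γ i) := ⋃ c, (S c ∪ T c) with hGdef
  have hGfin : G.Finite := Set.finite_iUnion (fun c => (hSfin' c).union (hTfin' c))
  set N : ℕ := hGfin.toFinset.card with hNdef
  set t : Fin N → (∀ i, Γ i) := fun j => (hGfin.toFinset.equivFin.symm j : _) with htdef
  have ht : ∀ u ∈ G, ∃ j, t j = u := by
    intro u hu
    refine ⟨hGfin.toFinset.equivFin ⟨u, hGfin.mem_toFinset.mpr hu⟩, ?_⟩
    simp [htdef]
  have hSG : ∀ c u, u ∈ S c → u ∈ G := fun c u hu => Set.mem_iUnion.2 ⟨c, Or.inl hu⟩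
  have hTG : ∀ c u, u ∈ T c → u ∈ G := fun c u hu => Set.mem_iUnion.2 ⟨c, Or.inr hu⟩
  -- the segmentations
  set emb : (Fin N → Bool) ≃ Fin (2 ^ N) :=
    (Equiv.arrowCongr (Equiv.refl _) finTwoEquiv.symm).trans finFunctionFinEquiv with hembdef
  refine ⟨fun _ => 2 ^ N, fun i a => emb (fun j => decide (t j i ≤ a)), ?_, ?_⟩
  · -- order-convexity of the fibers
    intro i c
    have hσiff : ∀ (a b : Γ i),
        emb (fun j => decide (t j i ≤ a)) = emb (fun j => decide (t j i ≤ b)) ↔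
        ∀ j, t j i ≤ a ↔ t j i ≤ b := by
      intro a b
      rw [emb.apply_eq_iff_eq, funext_iff]
      simp only [decide_eq_decide]
    constructor
    intro a ha b hb z hz
    simp only [Set.mem_preimage, Set.mem_singleton_iff] at ha hb ⊢
    rw [← ha]
    rw [← hb] at ha
    rw [hσiff] at ha ⊢
    intro j
    constructor
    · intro hz'
      exact (ha j).mpr (hz'.trans hz.2)
    · intro ha'
      exact ha'.trans hz.1
  · -- refinement
    intro x y hxy
    have hσiff : ∀ (i : Fin n) (a b : Γ i),
        emb (fun j => decide (t j i ≤ a)) = emb (fun j => decide (t j i ≤ b)) ↔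
        ∀ j, t j i ≤ a ↔ t j i ≤ b := by
      intro i a b
      rw [emb.apply_eq_iff_eq, funext_iff]
      simp only [decide_eq_decide]
    have key : ∀ u ∈ G, (u ≤ x ↔ u ≤ y) := by
      intro u hu
      obtain ⟨j, rfl⟩ := ht u hu
      constructor
      · intro h i; exact ((hσiff i (x i) (y i)).1 (hxy i) j).1 (h i)
      · intro h i; exact ((hσiff i (x i) (y i)).1 (hxy i) j).2 (h i)
    show g x = g y
    set c : Fin m := g x with hcdef
    obtain ⟨u, huS, hux⟩ := (hS' c x).1 ⟨x, rfl, le_refl x⟩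
    obtain ⟨x', hgx', hx'y⟩ := (hS' c y).2 ⟨u, huS, (key u (hSG c u huS)).1 hux⟩
    have hyD : ∃ y', g y' = c ∧ y ≤ y' := by
      by_contra h
      push_neg at h
      obtain ⟨w, hwT, hwy⟩ := (hT' c y).1 h
      have hwx : w ≤ x := (key w (hTG c w hwT)).2 hwy
      exact ((hT' c x).2 ⟨w, hwT, hwx⟩) x rfl (le_refl x)
    obtain ⟨y', hgy', hyy'⟩ := hyD
    have := gconv hx'y hyy' (hgx'.trans hgy'.symm)
    exact (this.trans hgx').symm
end

section
/- (Neumann's Lemma) Let (Γ, +, <) be an ordered Abelian group and S ⊆ Γ^{>0} a well-ordered subset. Then the map Σ : ⋃_{k∈ℕ} S^k → Γ sending a finite tuple to the sum of its entries has well-ordered image and finite fibers. -/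
/-- Neumann's Lemma: if `S ⊆ Γ^{>0}` is a well-ordered subset of an ordered Abelian
group, then the set of sums of finite tuples (lists) of elements of `S` is well ordered,
and for each `γ` there are only finitely many tuples with entries in `S` summing to `γ`. -/
theorem neumann_lemma {Γ : Type*} [AddCommGroup Γ] [LinearOrder Γ] [IsOrderedAddMonoid Γ] (S : Set Γ)
    (hS : S.IsWF) (hpos : S ⊆ Set.Ioi 0) :
    {g : Γ | ∃ l : List Γ, (∀ x ∈ l, x ∈ S) ∧ l.sum = g}.IsWF ∧
      ∀ γ : Γ, {l : List Γ | (∀ x ∈ l, x ∈ S) ∧ l.sum = γ}.Finite := by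
  set T : Set Γ := {g : Γ | ∃ l : List Γ, (∀ x ∈ l, x ∈ S) ∧ l.sum = g} with hT
  have hTclos : T = (AddSubmonoid.closure S : Set Γ) := by
    ext g
    constructor
    · rintro ⟨l, hl, rfl⟩
      exact list_sum_mem fun x hx => AddSubmonoid.subset_closure (hl x hx)
    · intro hg
      exact AddSubmonoid.exists_list_of_mem_closure hg
  have hTpwo : T.IsPWO := by
    rw [hTclos]
    exact hS.isPWO.addSubmonoid_closure (fun x hx => le_of_lt (hpos hx))
  have hTwf : T.IsWF := hTpwo.isWF
  refine ⟨hTwf, ?_⟩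
  intro γ
  by_cases hγ : γ ∈ T
  swap
  · refine Set.Finite.subset (Set.finite_empty) ?_
    rintro l ⟨hl, rfl⟩
    exact absurd ⟨l, hl, rfl⟩ hγ
  apply hTwf.induction hγ
  intro y hyT hy
  have hanti := Set.AddAntidiagonal.finite_of_isPWO hS.isPWO hTpwo y
  refine Set.Finite.subset (Set.Finite.union (Set.finite_singleton ([] : List Γ))
    (Set.Finite.biUnion hanti (fun p hp => Set.Finite.image (List.cons p.1)
      (hy p.2 hp.2.1 ?_)))) ?_
  · obtain ⟨h1, h2, h3⟩ := hp
    have := hpos h1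
    rw [Set.mem_Ioi] at this
    exact h3 ▸ lt_add_of_pos_left p.2 this
  · rintro l ⟨hl, rfl⟩
    cases l with
    | nil => exact Or.inl rfl
    | cons a t =>
      refine Or.inr ?_
      have ha : a ∈ S := hl a (List.mem_cons_self)
      have ht : ∀ x ∈ t, x ∈ S := fun x hx => hl x (List.mem_cons_of_mem a hx)
      have htT : t.sum ∈ T := ⟨t, ht, rfl⟩
      refine Set.mem_biUnion (show (a, t.sum) ∈ Set.antidiagonal S T (a :: t).sum from
        ⟨ha, htT, by simp⟩) ?_
      exact ⟨t, ⟨ht, rfl⟩, rfl⟩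
end

section
/- Let (Γ, +, <) be an ordered Abelian group and S ⊆ Γ^{>0} a well-ordered subset. Then there is no increasing function k : ℕ → ℕ and no sequence of tuples γ̄(n) ∈ S^{k(n)} such that the sequence of sums (Σ γ̄(n))_{n∈ℕ} is weakly decreasing and the tuples are pairwise distinct with strictly increasing lengths. -/
private lemma lenSet_finite {Γ : Type*} [AddCommGroup Γ] [LinearOrder Γ] [IsOrderedAddMonoid Γ] (S : Set Γ)
    (hS : S.IsWF) (hpos : S ⊆ Set.Ioi 0) :
    ∀ c ∈ (AddSubmonoid.closure S : Set Γ),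
      {m : ℕ | ∃ g : Fin m → Γ, (∀ i, g i ∈ S) ∧ ∑ i, g i = c}.Finite := by
  have hT : Set.IsPWO (AddSubmonoid.closure S : Set Γ) :=
    Set.IsPWO.addSubmonoid_closure (fun x hx => le_of_lt (hpos hx)) hS.isPWO
  intro c hc
  refine Set.WellFoundedOn.induction hT.isWF hc
    (P := fun y => {m : ℕ | ∃ g : Fin m → Γ, (∀ i, g i ∈ S) ∧ ∑ i, g i = y}.Finite) ?_
  intro y hy IH
  have hA : (Set.antidiagonal S (AddSubmonoid.closure S : Set Γ) y).Finite :=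
    Set.AddAntidiagonal.finite_of_isPWO hS.isPWO hT y
  have hsub : {m : ℕ | ∃ g : Fin m → Γ, (∀ i, g i ∈ S) ∧ ∑ i, g i = y} ⊆
      insert 0 (⋃ p ∈ Set.antidiagonal S (AddSubmonoid.closure S : Set Γ) y,
        Nat.succ '' {m : ℕ | ∃ g : Fin m → Γ, (∀ i, g i ∈ S) ∧ ∑ i, g i = p.2}) := by
    rintro m ⟨g, hg, hsum⟩
    cases m with
    | zero => exact Set.mem_insert _ _
    | succ m' =>
      refine Set.mem_insert_of_mem _ ?_
      set a : Γ := g 0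
      set b : Γ := ∑ i : Fin m', g i.succ
      have hb : b ∈ (AddSubmonoid.closure S : Set Γ) :=
        AddSubmonoid.sum_mem _ fun i _ => AddSubmonoid.subset_closure (hg i.succ)
      have hab : a + b = y := by
        rw [← hsum, Fin.sum_univ_succ]
      have hpmem : (a, b) ∈ Set.antidiagonal S (AddSubmonoid.closure S : Set Γ) y :=
        ⟨hg 0, hb, hab⟩
      refine Set.mem_biUnion hpmem ?_
      exact ⟨m', ⟨fun i => g i.succ, fun i => hg i.succ, rfl⟩, rfl⟩
  refine Set.Finite.subset ?_ hsub
  refine (hA.biUnion fun p hp => ?_).insert 0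
  have hp2 : p.2 ∈ (AddSubmonoid.closure S : Set Γ) := hp.2.1
  have hlt : p.2 < y := by
    have : (0 : Γ) < p.1 := hpos hp.1
    calc p.2 = 0 + p.2 := (zero_add _).symm
    _ < p.1 + p.2 := by exact add_lt_add_left this p.2
    _ = y := hp.2.2
  exact (IH p.2 hp2 hlt).image _

/-- Key step of Neumann's Lemma: for a well-ordered `S ⊆ Γ^{>0}` there is no sequence of
tuples from `S` with strictly increasing lengths whose sums are weakly decreasing. -/
theorem no_decreasing_sums_of_increasing_lengths {Γ : Type*}
    [AddCommGroup Γ] [LinearOrder Γ] [IsOrderedAddMonoid Γ] (S : Set Γ) (hS : S.IsWF) (hpos : S ⊆ Set.Ioi 0) :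
    ¬ ∃ (k : ℕ → ℕ) (γ : ∀ n, Fin (k n) → Γ),
        StrictMono k ∧ (∀ n i, γ n i ∈ S) ∧
        Antitone (fun n => ∑ i, γ n i) := by
  rintro ⟨k, γ, hk, hmem, hanti⟩
  have hT : Set.IsPWO (AddSubmonoid.closure S : Set Γ) :=
    Set.IsPWO.addSubmonoid_closure (fun x hx => le_of_lt (hpos hx)) hS.isPWO
  have hsumsT : ∀ n, ∑ i, γ n i ∈ (AddSubmonoid.closure S : Set Γ) := fun n =>
    AddSubmonoid.sum_mem _ fun i _ => AddSubmonoid.subset_closure (hmem n i)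
  set R : Set Γ := Set.range (fun n => ∑ i, γ n i) with hR
  have hRsub : R ⊆ (AddSubmonoid.closure S : Set Γ) := by
    rintro _ ⟨n, rfl⟩; exact hsumsT n
  have hRwf : R.IsWF := (hT.isWF).mono hRsub
  have hRne : R.Nonempty := ⟨_, ⟨0, rfl⟩⟩
  set c : Γ := hRwf.min hRne with hc
  obtain ⟨n₀, hn₀⟩ : c ∈ R := hRwf.min_mem hRne
  have hconst : ∀ n ≥ n₀, ∑ i, γ n i = c := by
    intro n hn
    have h1 : ∑ i, γ n i ≤ c := hn₀ ▸ hanti hn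
    have h2 : ¬ (∑ i, γ n i) < c := hRwf.not_lt_min hRne ⟨n, rfl⟩
    exact le_antisymm h1 (not_lt.mp h2)
  have hfin := lenSet_finite S hS hpos c (hn₀ ▸ hsumsT n₀)
  have hinf : {m : ℕ | ∃ g : Fin m → Γ, (∀ i, g i ∈ S) ∧ ∑ i, g i = c}.Infinite := by
    apply Set.infinite_of_injective_forall_mem (f := fun n : ℕ => k (n₀ + n))
    · intro a b hab
      exact Nat.add_left_cancel (hk.injective hab)
    · intro n
      exact ⟨γ (n₀ + n), hmem _, hconst _ (Nat.le_add_right _ _)⟩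
  exact hinf hfin
end

section
/- Let (𝔐, ·, <) be a linearly ordered group and S₀, S₁ reverse well-ordered subsets of 𝔐 (i.e., well-ordered for the opposite order). Then for each final segment U of 𝔐 there exist n ∈ ℕ, final segments U₀, …, U_{n−1} of S₀, and segments T₀, …, T_{n−1} of S₁ such that (S₀ · S₁) ∩ U decomposes as {(s₀, s₁) ∈ S₀ × S₁ : s₀s₁ ∈ U} = ⨆_{i<n} U_i × T_i (a disjoint union). -/
/-- Let `(𝔐, ·, <)` be a linearly ordered group and `S₀, S₁` reverse well-ordered
subsets (every nonempty subset has a maximum). For each final segment `U` of `𝔐` there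
are finitely many final segments `Uᵢ` of `S₀` and segments `Tᵢ` of `S₁` such that
`{(s₀,s₁) ∈ S₀ × S₁ : s₀s₁ ∈ U}` is the disjoint union of the rectangles `Uᵢ × Tᵢ`. -/
theorem product_segmentation {M : Type*} [CommGroup M] [LinearOrder M] [IsOrderedMonoid M] (S0 S1 : Set M)
    (h0 : ∀ T ⊆ S0, T.Nonempty → ∃ m ∈ T, ∀ x ∈ T, x ≤ m)
    (h1 : ∀ T ⊆ S1, T.Nonempty → ∃ m ∈ T, ∀ x ∈ T, x ≤ m)
    (U : Set M) (hU : IsUpperSet U) :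
    ∃ (n : ℕ) (Us Ts : Fin n → Set M),
      (∀ i, Us i ⊆ S0 ∧ ∀ x ∈ Us i, ∀ y ∈ S0, x ≤ y → y ∈ Us i) ∧
      (∀ i, Ts i ⊆ S1 ∧
        ∀ x ∈ Ts i, ∀ y ∈ Ts i, ∀ z ∈ S1, x ≤ z → z ≤ y → z ∈ Ts i) ∧
      (∀ i j, i ≠ j → Disjoint (Us i ×ˢ Ts i) (Us j ×ˢ Ts j)) ∧
      {p : M × M | p.1 ∈ S0 ∧ p.2 ∈ S1 ∧ p.1 * p.2 ∈ U} = ⋃ i, Us i ×ˢ Ts i := by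
  classical
  -- the fiber of `t`: the final segment of `S0` of elements `x` with `x * t ∈ U`
  set fib : M → Set M := fun t => {x | x ∈ S0 ∧ x * t ∈ U} with hfibdef
  have fib_sub : ∀ t : M, fib t ⊆ S0 := fun t x hx => hx.1
  have fib_final : ∀ t : M, ∀ x ∈ fib t, ∀ y ∈ S0, x ≤ y → y ∈ fib t := by
    intro t x hx y hy hxy
    exact ⟨hy, hU (mul_le_mul_left hxy t) hx.2⟩
  have fib_mono : ∀ {s t : M}, s ≤ t → fib s ⊆ fib t := by
    intro s t hst x hx
    exact ⟨hx.1, hU (mul_le_mul_right hst x) hx.2⟩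
  -- `B`: elements of `S1` whose fiber is nonempty and which are maximal in their fiber-class
  set B : Set M := {t | t ∈ S1 ∧ (fib t).Nonempty ∧ ∀ u ∈ S1, fib u = fib t → u ≤ t}
    with hBdef
  have hBS1 : B ⊆ S1 := fun t ht => ht.1
  have hBne : ∀ s ∈ B, ∀ t ∈ B, fib s = fib t → s = t := by
    intro s hs t ht h
    exact le_antisymm (ht.2.2 s hs.1 h) (hs.2.2 t ht.1 h.symm)
  -- `B` is finite
  have hBfin : B.Finite := by
    by_contra hinf
    have hinf : B.Infinite := hinf
    obtain f := hinf.natEmbedding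
    -- `S1` viewed in the dual order is well-founded, hence PWO
    have hwf : (OrderDual.ofDual ⁻¹' S1 : Set Mᵒᵈ).IsWF := by
      rw [Set.isWF_iff_no_descending_seq]
      intro g hg hmem
      set g' : ℕ → M := fun n => OrderDual.ofDual (g n) with hg'
      have hg'mono : StrictMono g' := fun a b hab => hg hab
      obtain ⟨m, hmmem, hmmax⟩ := h1 (Set.range g') (by
        rintro _ ⟨n, rfl⟩; exact hmem n) ⟨g' 0, 0, rfl⟩
      obtain ⟨k, rfl⟩ := hmmem
      exact absurd (hmmax (g' (k + 1)) ⟨k + 1, rfl⟩) (not_le.mpr (hg'mono (Nat.lt_succ_self k)))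
    have hpwo := hwf.isPWO
    -- extract a subsequence of `f` which is antitone in `M`
    obtain ⟨g, hg⟩ := hpwo.exists_monotone_subseq
      (f := fun n => OrderDual.toDual ((f n : M))) (fun n => hBS1 (f n).2)
    set x : ℕ → M := fun n => ((f (g n) : M)) with hx
    have hxB : ∀ n, x n ∈ B := fun n => (f (g n)).2
    have hxanti : ∀ {m n : ℕ}, m ≤ n → x n ≤ x m := fun {m n} h => hg h
    have hxinj : Function.Injective x := by
      intro a b hab
      exact g.injective (by
        have := f.injective (Subtype.ext hab)
        exact this)
    have hxstrict : ∀ n : ℕ, x (n + 1) < x n := by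
      intro n
      rcases lt_or_eq_of_le (hxanti (Nat.le_succ n)) with h | h
      · exact h
      · exact absurd (hxinj h) (by omega)
    -- choose witnesses of strictness of the fiber chain
    have hstep : ∀ n : ℕ, ∃ y, y ∈ fib (x n) ∧ y ∉ fib (x (n + 1)) := by
      intro n
      by_contra hcon
      push_neg at hcon
      have hsub : fib (x n) ⊆ fib (x (n + 1)) := fun y hy => hcon y hy
      have heq : fib (x (n + 1)) = fib (x n) :=
        Set.Subset.antisymm (fib_mono (hxstrict n).le) hsub
      exact absurd (hBne _ (hxB (n + 1)) _ (hxB n) heq) (ne_of_lt (hxstrict n))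
    choose y hy1 hy2 using hstep
    have hymono : ∀ n : ℕ, y n < y (n + 1) := by
      intro n
      by_contra hcon
      push_neg at hcon
      exact hy2 n (fib_final _ _ (hy1 (n + 1)) _ (fib_sub _ (hy1 n)) hcon)
    obtain ⟨m, hmmem, hmmax⟩ := h0 (Set.range y) (by
      rintro _ ⟨n, rfl⟩; exact fib_sub _ (hy1 n)) ⟨y 0, 0, rfl⟩
    obtain ⟨k, rfl⟩ := hmmem
    exact absurd (hmmax (y (k + 1)) ⟨k + 1, rfl⟩) (not_le.mpr (hymono k))
  -- enumerate `B`
  set n := hBfin.toFinset.card with hn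
  set e := hBfin.toFinset.equivFin with he
  set b : Fin n → M := fun i => ((e.symm i : M)) with hb
  have hbB : ∀ i, b i ∈ B := fun i => hBfin.mem_toFinset.mp (e.symm i).2
  have hbinj : Function.Injective b := by
    intro i j hij
    exact e.symm.injective (Subtype.ext hij)
  refine ⟨n, fun i => fib (b i), fun i => {t | t ∈ S1 ∧ fib t = fib (b i)}, ?_, ?_, ?_, ?_⟩
  · exact fun i => ⟨fib_sub _, fib_final _⟩
  · intro i
    refine ⟨fun t ht => ht.1, ?_⟩
    intro p hp q hq z hz hpz hzq
    refine ⟨hz, Set.Subset.antisymm ?_ ?_⟩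
    · rw [← hq.2]; exact fib_mono hzq
    · rw [← hp.2]; exact fib_mono hpz
  · intro i j hij
    rw [Set.disjoint_left]
    rintro ⟨p, q⟩ hpi hpj
    have h1' : fib q = fib (b i) := hpi.2.2
    have h2' : fib q = fib (b j) := hpj.2.2
    exact hij (hbinj (hBne _ (hbB i) _ (hbB j) (h1'.symm.trans h2')))
  · ext ⟨p, q⟩
    simp only [Set.mem_setOf_eq, Set.mem_iUnion, Set.mem_prod]
    constructor
    · rintro ⟨hp, hq, hpq⟩
      obtain ⟨m, hmmem, hmmax⟩ := h1 {t | t ∈ S1 ∧ fib t = fib q}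
        (fun t ht => ht.1) ⟨q, hq, rfl⟩
      have hmB : m ∈ B := by
        refine ⟨hmmem.1, ?_, ?_⟩
        · rw [hmmem.2]; exact ⟨p, hp, hpq⟩
        · intro u hu hufib
          exact hmmax u ⟨hu, hufib.trans hmmem.2⟩
      refine ⟨e ⟨m, hBfin.mem_toFinset.mpr hmB⟩, ?_, ?_⟩
      · have : b (e ⟨m, hBfin.mem_toFinset.mpr hmB⟩) = m := by
          simp [hb]
        rw [this, hmmem.2]
        exact ⟨hp, hpq⟩
      · have : b (e ⟨m, hBfin.mem_toFinset.mpr hmB⟩) = m := by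
          simp [hb]
        rw [this, hmmem.2]
        exact ⟨hq, rfl⟩
    · rintro ⟨i, hpi, hqi⟩
      have hpq : p ∈ fib q := by rw [hqi.2]; exact hpi
      exact ⟨hpq.1, hqi.1, hpq.2⟩
end

section
/- Let 𝔐 = 𝔑₀ × ⋯ × 𝔑_{n−1} be a product of totally ordered Abelian groups with the product partial order and 𝕂 a field. If X ⊆ 𝕂⟪𝔐⟫ is closed under truncations, then the 𝕂-subalgebra of 𝕂⟪𝔐⟫ generated by X is closed under truncations. -/
/-- The `S`-fragment `f|S` of a Hahn series. -/
noncomputable def HahnSeries.restrictSet {Γ K : Type*} [PartialOrder Γ] [Zero K]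
    (f : HahnSeries Γ K) (S : Set Γ) : HahnSeries Γ K :=
  ⟨S.indicator f.coeff, f.isPWO_support'.mono (by
    rw [Set.support_indicator]; exact Set.inter_subset_right)⟩

namespace TruncAux

open HahnSeries
open scoped Classical

section Restrict

variable {Γ K : Type*} [PartialOrder Γ] [Zero K]

lemma coeff_restrictSet (f : HahnSeries Γ K) (S : Set Γ) (p : Γ) :
    (f.restrictSet S).coeff p = if p ∈ S then f.coeff p else 0 :=
  Set.indicator_apply S f.coeff p

lemma support_restrictSet (f : HahnSeries Γ K) (S : Set Γ) :
    (f.restrictSet S).support ⊆ f.support := by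
  intro p hp
  rw [HahnSeries.mem_support, coeff_restrictSet] at hp
  rw [HahnSeries.mem_support]
  intro h
  apply hp
  split <;> simp [h]

lemma restrictSet_congr (f : HahnSeries Γ K) {S T : Set Γ}
    (h : ∀ p ∈ f.support, p ∈ S ↔ p ∈ T) : f.restrictSet S = f.restrictSet T := by
  ext p
  rw [coeff_restrictSet, coeff_restrictSet]
  by_cases hp : p ∈ f.support
  · rw [if_congr (h p hp) rfl rfl]
  · rw [HahnSeries.mem_support, not_not] at hp
    simp [hp]

lemma restrictSet_restrictSet (f : HahnSeries Γ K) (S T : Set Γ) :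
    (f.restrictSet S).restrictSet T = f.restrictSet (S ∩ T) := by
  ext p
  simp only [coeff_restrictSet, Set.mem_inter_iff]
  split_ifs with h1 h2 h3 h3 <;> tauto

lemma restrictSet_univ (f : HahnSeries Γ K) : f.restrictSet Set.univ = f := by
  ext p; simp [coeff_restrictSet]

lemma restrictSet_single (a : Γ) (r : K) (S : Set Γ) :
    (HahnSeries.single a r).restrictSet S
      = if a ∈ S then HahnSeries.single a r else 0 := by
  ext p
  rw [coeff_restrictSet]
  by_cases hpa : p = a
  · subst hpa
    split_ifs <;> simp_all
  · split_ifs <;> simp_all [HahnSeries.coeff_single_of_ne hpa]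

end Restrict

section Add

variable {Γ K : Type*} [PartialOrder Γ] [AddCommMonoid K]

lemma restrictSet_add (f g : HahnSeries Γ K) (S : Set Γ) :
    (f + g).restrictSet S = f.restrictSet S + g.restrictSet S := by
  ext p
  simp only [HahnSeries.coeff_add, coeff_restrictSet]
  split <;> simp

lemma coeff_sum {ι : Type*} (s : Finset ι) (h : ι → HahnSeries Γ K) (p : Γ) :
    (∑ i ∈ s, h i).coeff p = ∑ i ∈ s, (h i).coeff p := by
  classical
  induction s using Finset.induction with
  | empty => simp
  | insert _ _ hx ih => rw [Finset.sum_insert hx, Finset.sum_insert hx, HahnSeries.coeff_add, ih]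

end Add

section Group

variable {Γ : Type*} [AddCommGroup Γ] [PartialOrder Γ] [IsOrderedAddMonoid Γ]

/-- finite intersection of strict-lower cones -/
def inte (cs : Finset Γ) : Set Γ := {x | ∀ c ∈ cs, x < c}

lemma mem_inte {cs : Finset Γ} {x : Γ} : x ∈ inte cs ↔ ∀ c ∈ cs, x < c := Iff.rfl

lemma inte_empty : (inte (∅ : Finset Γ)) = Set.univ := by
  ext x; simp [inte]

lemma inte_insert [DecidableEq Γ] (c : Γ) (cs : Finset Γ) :
    inte (insert c cs) = inte cs ∩ {y | y < c} := by
  ext x; simp [inte]; tauto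

lemma isLowerSet_inte (cs : Finset Γ) : IsLowerSet (inte cs) :=
  fun _ y hxy hx c hc => lt_of_le_of_lt hxy (hx c hc)

/-- Claim 1: finitely many distinct cuts. -/
lemma finite_cuts {F G : Set Γ} (hF : F.IsPWO) (hG : G.IsPWO) {S : Set Γ}
    (hS : IsLowerSet S) :
    ((fun b => {a | a ∈ F ∧ a + b ∈ S}) '' G).Finite := by
  classical
  set C : Γ → Set Γ := fun b => {a | a ∈ F ∧ a + b ∈ S} with hCdef
  by_contra hfin
  have hinf : (C '' G).Infinite := hfin
  set e := hinf.natEmbedding with he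
  have hex : ∀ k : ℕ, ∃ b, b ∈ G ∧ C b = (e k : Set Γ) := by
    intro k
    obtain ⟨b, hb, hcb⟩ := (e k).2
    exact ⟨b, hb, hcb⟩
  choose b hbG hbC using hex
  have hbinj : ∀ k l, C (b k) = C (b l) → k = l := by
    intro k l hkl
    rw [hbC, hbC] at hkl
    exact e.injective (Subtype.ext hkl)
  obtain ⟨φ, hφ⟩ := hG.exists_monotone_subseq (f := b) hbG
  have hanti : ∀ k l : ℕ, k ≤ l → C (b (φ l)) ⊆ C (b (φ k)) := by
    intro k l hkl a ha
    exact ⟨ha.1, hS (add_le_add le_rfl (hφ hkl)) ha.2⟩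
  have hstep : ∀ k : ℕ, ∃ a, a ∈ C (b (φ k)) ∧ a ∉ C (b (φ (k + 1))) := by
    intro k
    have hne : C (b (φ (k+1))) ≠ C (b (φ k)) := by
      intro h
      have h2 := φ.injective (hbinj _ _ h)
      omega
    obtain ⟨a, ha1, ha2⟩ := Set.exists_of_ssubset (ssubset_of_subset_of_ne
      (hanti k (k+1) (Nat.le_succ k)) hne)
    exact ⟨a, ha1, ha2⟩
  choose a ha1 ha2 using hstep
  have haF : ∀ k, a k ∈ F := fun k => (ha1 k).1
  obtain ⟨m, n, hmn, hle⟩ := hF.exists_lt haF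
  apply ha2 m
  refine ⟨haF m, ?_⟩
  have h1 : a n + b (φ n) ∈ S := (ha1 n).2
  have h2 : b (φ (m+1)) ≤ b (φ n) := hφ (Nat.succ_le_of_lt hmn : m+1 ≤ n)
  exact hS (add_le_add hle h2) h1

/-- pick finitely many representatives realizing all values of `D` on `v` -/
lemma exists_finite_reps {v : Set Γ} {D : Γ → Set Γ} (hfin : (D '' v).Finite) :
    ∃ R : Finset Γ, ↑R ⊆ v ∧ ∀ b, (∀ a ∈ R, b ∈ D a) → ∀ a ∈ v, b ∈ D a := by
  classical
  set rep : Set Γ → Γ := fun w => if h : ∃ a ∈ v, D a = w then h.choose else 0 with hrep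
  have hrepv : ∀ w ∈ D '' v, rep w ∈ v ∧ D (rep w) = w := by
    intro w hw
    obtain ⟨aa, haa, rfl⟩ := hw
    have h : ∃ a ∈ v, D a = D aa := ⟨aa, haa, rfl⟩
    simp only [hrep, dif_pos h]
    exact ⟨h.choose_spec.1, h.choose_spec.2⟩
  refine ⟨hfin.toFinset.image rep, ?_, ?_⟩
  · intro x hx
    simp only [Finset.coe_image, Set.mem_image, Finset.mem_coe,
      Set.Finite.mem_toFinset] at hx
    obtain ⟨w, hw, rfl⟩ := hx
    exact (hrepv w hw).1
  · intro bb hbb aa haa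
    have hmem : D aa ∈ D '' v := ⟨aa, haa, rfl⟩
    have hrepmem : rep (D aa) ∈ hfin.toFinset.image rep :=
      Finset.mem_image_of_mem rep (hfin.mem_toFinset.2 hmem)
    have := hbb _ hrepmem
    rwa [(hrepv _ hmem).2] at this

end Group

section Mul

variable {Γ K : Type*} [AddCommGroup Γ] [PartialOrder Γ] [IsOrderedAddMonoid Γ] [CommRing K]

lemma mul_coeff_both {x y : HahnSeries Γ K} {s t : Set Γ} (hs : s.IsPWO) (ht : t.IsPWO)
    (hxs : x.support ⊆ s) (hyt : y.support ⊆ t) (p : Γ) :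
    (x * y).coeff p = ∑ ij ∈ Finset.antidiagonal hs ht p, x.coeff ij.1 * y.coeff ij.2 := by
  rw [HahnSeries.coeff_mul]
  refine Finset.sum_subset ?_ ?_
  · intro ij hij
    rw [Finset.mem_addAntidiagonal] at hij ⊢
    exact ⟨hxs hij.1, hyt hij.2.1, hij.2.2⟩
  · intro ij hij hnot
    rw [Finset.mem_addAntidiagonal] at hij hnot
    by_cases h1 : ij.1 ∈ x.support
    · have h2 : ij.2 ∉ y.support := fun h2 => hnot ⟨h1, h2, hij.2.2⟩
      rw [HahnSeries.mem_support, not_not] at h2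
      rw [h2, mul_zero]
    · rw [HahnSeries.mem_support, not_not] at h1
      rw [h1, zero_mul]

lemma mul_restrict_mem (R : Subalgebra K (HahnSeries Γ K)) (f g : HahnSeries Γ K)
    (hf : ∀ ds : Finset Γ, f.restrictSet (inte ds) ∈ R)
    (hg : ∀ ds : Finset Γ, g.restrictSet (inte ds) ∈ R)
    (cs : Finset Γ) : (f * g).restrictSet (inte cs) ∈ R := by
  classical
  set S : Set Γ := inte cs with hSdef
  have hS : IsLowerSet S := isLowerSet_inte cs
  set C : Γ → Set Γ := fun b => {a | a ∈ f.support ∧ a + b ∈ S} with hCdef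
  have hCfin : (C '' g.support).Finite := finite_cuts f.isPWO_support g.isPWO_support hS
  set V : Finset (Set Γ) := hCfin.toFinset with hVdef
  have hmemV : ∀ b ∈ g.support, C b ∈ V := fun b hb => hCfin.mem_toFinset.2 ⟨b, hb, rfl⟩
  have hselex : ∀ v, v ∈ V → ∃ b, b ∈ g.support ∧ C b = v := by
    intro v hv
    obtain ⟨b, hb, rfl⟩ := hCfin.mem_toFinset.1 hv
    exact ⟨b, hb, rfl⟩
  set bsel : Set Γ → Γ :=
    fun v => if h : ∃ b, b ∈ g.support ∧ C b = v then h.choose else 0 with hbseldef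
  have hbsel : ∀ v ∈ V, bsel v ∈ g.support ∧ C (bsel v) = v := by
    intro v hv
    have h := hselex v hv
    simp only [hbseldef, dif_pos h]
    exact h.choose_spec
  set Tf : Set Γ → Set Γ := fun v => {a | a + bsel v ∈ S} with hTfdef
  set Fv : Set Γ → Set Γ := fun v => {b | b ∈ g.support ∧ C b = v} with hFvdef
  have hid : (f * g).restrictSet S
      = ∑ v ∈ V, (f.restrictSet (Tf v)) * (g.restrictSet (Fv v)) := by
    ext p
    rw [coeff_sum, coeff_restrictSet]
    have hcalc : ∀ v ∈ V, ((f.restrictSet (Tf v)) * (g.restrictSet (Fv v))).coeff p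
        = ∑ ij ∈ Finset.antidiagonal f.isPWO_support g.isPWO_support p,
            (f.restrictSet (Tf v)).coeff ij.1 * (g.restrictSet (Fv v)).coeff ij.2 :=
      fun v _ => mul_coeff_both f.isPWO_support g.isPWO_support
        (support_restrictSet _ _) (support_restrictSet _ _) p
    rw [Finset.sum_congr rfl hcalc, Finset.sum_comm]
    have hinner : ∀ ij ∈ Finset.antidiagonal f.isPWO_support g.isPWO_support p,
        (∑ v ∈ V, (f.restrictSet (Tf v)).coeff ij.1 * (g.restrictSet (Fv v)).coeff ij.2)
        = (if p ∈ S then f.coeff ij.1 * g.coeff ij.2 else 0) := by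
      intro ij hij
      rw [Finset.mem_addAntidiagonal] at hij
      obtain ⟨hij1, hij2, hijp⟩ := hij
      rw [Finset.sum_eq_single (C ij.2)]
      · have hmem2 : ij.2 ∈ Fv (C ij.2) := ⟨hij2, rfl⟩
        rw [coeff_restrictSet, coeff_restrictSet, if_pos hmem2]
        have hb' := hbsel (C ij.2) (hmemV ij.2 hij2)
        have hiff : ij.1 ∈ Tf (C ij.2) ↔ p ∈ S := by
          have h1 : ij.1 ∈ Tf (C ij.2) ↔ ij.1 ∈ C (bsel (C ij.2)) := by
            constructor
            · intro h; exact ⟨hij1, h⟩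
            · intro h; exact h.2
          rw [h1, hb'.2]
          constructor
          · intro h; rw [← hijp]; exact h.2
          · intro h; exact ⟨hij1, hijp ▸ h⟩
        by_cases hp : p ∈ S
        · rw [if_pos hp, if_pos (hiff.2 hp)]
        · rw [if_neg hp, if_neg (fun h => hp (hiff.1 h)), zero_mul]
      · intro v hv hne
        have hnot : ij.2 ∉ Fv v := fun h => hne h.2.symm
        rw [coeff_restrictSet (f := g), if_neg hnot, mul_zero]
      · intro habs
        exact absurd (hmemV ij.2 hij2) habs
    rw [Finset.sum_congr rfl hinner]
    by_cases hp : p ∈ S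
    · simp only [if_pos hp]
      rw [HahnSeries.coeff_mul]
    · simp only [if_neg hp, Finset.sum_const_zero]
  rw [hid]
  apply sum_mem
  intro v hv
  have hvF : v ⊆ f.support := by
    obtain ⟨b0, hb0, hCb0⟩ := hselex v hv
    rw [← hCb0]; exact fun a ha => ha.1
  apply mul_mem
  · have heq : Tf v = inte (cs.image (fun c => c - bsel v)) := by
      ext aa
      simp only [hTfdef, Set.mem_setOf_eq, mem_inte, Finset.mem_image, hSdef]
      constructor
      · rintro h c' ⟨c, hc, rfl⟩
        exact lt_sub_iff_add_lt.2 (h c hc)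
      · intro h c hc
        exact lt_sub_iff_add_lt.1 (h _ ⟨c, hc, rfl⟩)
    rw [heq]; exact hf _
  · -- the Möbius part
    have hGv : ∀ w ∈ V, g.restrictSet {b | b ∈ g.support ∧ w ⊆ C b} ∈ R := by
      intro w hw
      have hwF : w ⊆ f.support := by
        obtain ⟨b0, hb0, hCb0⟩ := hselex w hw
        rw [← hCb0]; exact fun a ha => ha.1
      set D : Γ → Set Γ := fun a => {b | b ∈ g.support ∧ b + a ∈ S} with hDdef
      have hDfin : (D '' w).Finite :=
        (finite_cuts g.isPWO_support f.isPWO_support hS).subset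
          (Set.image_mono hwF)
      obtain ⟨Rp, hRpv, hRp⟩ := exists_finite_reps hDfin
      have heq : g.restrictSet {b | b ∈ g.support ∧ w ⊆ C b}
          = g.restrictSet (inte ((Rp ×ˢ cs).image fun q => q.2 - q.1)) := by
        apply restrictSet_congr
        intro b hb
        simp only [Set.mem_setOf_eq, mem_inte, Finset.mem_image, Finset.mem_product]
        constructor
        · rintro ⟨_, hsub⟩ c' ⟨⟨a, c⟩, ⟨haRp, hc⟩, rfl⟩
          have haC : a ∈ C b := hsub (hRpv haRp)
          have : a + b < c := haC.2 c hc
          exact lt_sub_iff_add_lt.2 (by rwa [add_comm] at this)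
        · intro h
          refine ⟨hb, ?_⟩
          intro a ha
          have hall : ∀ a0 ∈ Rp, b ∈ D a0 := by
            intro a0 ha0
            refine ⟨hb, ?_⟩
            intro c hc
            have h2 := h _ ⟨⟨a0, c⟩, ⟨ha0, hc⟩, rfl⟩
            rw [lt_sub_iff_add_lt] at h2
            exact h2
          have hbDa : b ∈ D a := hRp b hall a ha
          refine ⟨hwF ha, ?_⟩
          have := hbDa.2
          rwa [add_comm] at this
      rw [heq]; exact hg _
    have hsplit : ∀ w ∈ V, g.restrictSet {b | b ∈ g.support ∧ w ⊆ C b}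
        = ∑ w' ∈ V.filter (fun w' => w ⊆ w'), g.restrictSet (Fv w') := by
      intro w hw
      ext p
      rw [coeff_restrictSet, coeff_sum]
      by_cases hpG : p ∈ g.support
      · by_cases hsub : w ⊆ C p
        · rw [if_pos (show p ∈ {b | b ∈ g.support ∧ w ⊆ C b} by exact ⟨hpG, hsub⟩)]
          rw [Finset.sum_eq_single (C p)]
          · rw [coeff_restrictSet,
              if_pos (show p ∈ Fv (C p) by exact ⟨hpG, rfl⟩)]
          · intro w' hw' hne
            rw [coeff_restrictSet,
              if_neg (show p ∉ Fv w' by intro h; exact hne h.2.symm)]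
          · intro habs
            exact absurd (Finset.mem_filter.2 ⟨hmemV p hpG, hsub⟩) habs
        · rw [if_neg (show p ∉ {b | b ∈ g.support ∧ w ⊆ C b} by
            intro h; exact hsub h.2)]
          symm; apply Finset.sum_eq_zero
          intro w' hw'
          rw [coeff_restrictSet, if_neg (show p ∉ Fv w' by
            intro h
            exact hsub (by rw [h.2]; exact (Finset.mem_filter.1 hw').2))]
      · rw [if_neg (show p ∉ {b | b ∈ g.support ∧ w ⊆ C b} by
          intro h; exact hpG h.1)]
        symm; apply Finset.sum_eq_zero
        intro w' hw'
        rw [coeff_restrictSet, if_neg (show p ∉ Fv w' by intro h; exact hpG h.1)]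
    have hFvR : ∀ n : ℕ, ∀ w ∈ V,
        (V.filter (fun w' => w ⊂ w')).card ≤ n → g.restrictSet (Fv w) ∈ R := by
      intro n
      induction n with
      | zero =>
        intro w hw hcard
        have hempty : V.filter (fun w' => w ⊂ w') = ∅ :=
          Finset.card_eq_zero.1 (Nat.le_zero.1 hcard)
        have hfe : V.filter (fun w' => w ⊆ w') = {w} := by
          ext w'
          simp only [Finset.mem_filter, Finset.mem_singleton]
          constructor
          · rintro ⟨hw', hsub⟩
            by_contra hne
            have hmem : w' ∈ V.filter (fun w' => w ⊂ w') :=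
              Finset.mem_filter.2 ⟨hw', ssubset_of_subset_of_ne hsub (Ne.symm hne)⟩
            rw [hempty] at hmem
            exact absurd hmem (Finset.notMem_empty _)
          · rintro rfl; exact ⟨hw, subset_rfl⟩
        have hs := hsplit w hw
        rw [hfe, Finset.sum_singleton] at hs
        rw [← hs]; exact hGv w hw
      | succ n ih =>
        intro w hw hcard
        have hfe : V.filter (fun w' => w ⊆ w') = insert w (V.filter (fun w' => w ⊂ w')) := by
          ext w'
          simp only [Finset.mem_filter, Finset.mem_insert]
          constructor
          · rintro ⟨hw', hsub⟩
            rcases eq_or_ne w' w with h | h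
            · exact Or.inl h
            · exact Or.inr ⟨hw', ssubset_of_subset_of_ne hsub (Ne.symm h)⟩
          · rintro (rfl | h)
            · exact ⟨hw, subset_rfl⟩
            · exact ⟨h.1, h.2.subset⟩
        have hnotmem : w ∉ V.filter (fun w' => w ⊂ w') := by
          simp only [Finset.mem_filter]
          rintro ⟨-, h⟩
          exact h.ne rfl
        have hs := hsplit w hw
        rw [hfe, Finset.sum_insert hnotmem] at hs
        have heq : g.restrictSet (Fv w)
            = g.restrictSet {b | b ∈ g.support ∧ w ⊆ C b}
              - ∑ w' ∈ V.filter (fun w' => w ⊂ w'), g.restrictSet (Fv w') := by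
          rw [hs]; ring
        rw [heq]
        apply sub_mem (hGv w hw)
        apply sum_mem
        intro w' hw'
        have hw'' := Finset.mem_filter.1 hw'
        apply ih w' hw''.1
        have hsubset : V.filter (fun x => w' ⊂ x) ⊆ V.filter (fun x => w ⊂ x) := by
          intro x hx
          have hx' := Finset.mem_filter.1 hx
          exact Finset.mem_filter.2 ⟨hx'.1, hw''.2.trans hx'.2⟩
        have hlt : (V.filter (fun x => w' ⊂ x)).card < (V.filter (fun x => w ⊂ x)).card := by
          apply Finset.card_lt_card
          rw [Finset.ssubset_iff_of_subset hsubset]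
          refine ⟨w', hw', ?_⟩
          simp only [Finset.mem_filter]
          rintro ⟨-, h⟩
          exact h.ne rfl
        omega
    exact hFvR _ v hv le_rfl

lemma X_restrict {X : Set (HahnSeries Γ K)}
    (htr : ∀ x ∈ X, ∀ c : Γ, x.restrictSet {y | y < c} ∈ X) :
    ∀ x ∈ X, ∀ cs : Finset Γ, x.restrictSet (inte cs) ∈ X := by
  classical
  intro x hx cs
  induction cs using Finset.induction with
  | empty => rw [inte_empty, restrictSet_univ]; exact hx
  | @insert c cs' hc ih =>
    rw [inte_insert, ← restrictSet_restrictSet]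
    exact htr _ ih c

theorem master {X : Set (HahnSeries Γ K)}
    (htr : ∀ x ∈ X, ∀ c : Γ, x.restrictSet {y | y < c} ∈ X) :
    ∀ f ∈ Algebra.adjoin K X, ∀ cs : Finset Γ,
      f.restrictSet (inte cs) ∈ Algebra.adjoin K X := by
  intro f hf
  induction hf using Algebra.adjoin_induction with
  | mem x hx => exact fun cs => Algebra.subset_adjoin (X_restrict htr x hx cs)
  | algebraMap r =>
    intro cs
    have h : algebraMap K (HahnSeries Γ K) r = HahnSeries.single (0 : Γ) r := by
      rw [HahnSeries.algebraMap_apply, HahnSeries.C_apply]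
      simp
    rw [h, restrictSet_single]
    split
    · rw [← h]; exact algebraMap_mem _ r
    · exact zero_mem _
  | add x y hx hy ihx ihy =>
    intro cs
    rw [restrictSet_add]
    exact add_mem (ihx cs) (ihy cs)
  | mul x y hx hy ihx ihy =>
    intro cs
    exact mul_restrict_mem (Algebra.adjoin K X) x y ihx ihy cs

end Mul

end TruncAux

/-- Let `𝔐 = 𝔑₀ × ⋯ × 𝔑_{n−1}` be a product of totally ordered Abelian groups with the
product partial order.  If `X ⊆ 𝕂⟪𝔐⟫` is closed under truncations `f|{𝔫 : 𝔫 > 𝔪}`,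
then the `𝕂`-subalgebra of `𝕂⟪𝔐⟫` generated by `X` is closed under truncations.
(Supports are reverse well partially ordered, encoded via the order dual.) -/
theorem algebra_adjoin_truncationClosed
    {n : ℕ} (N : Fin n → Type*) [∀ i, AddCommGroup (N i)] [∀ i, LinearOrder (N i)]
    [∀ i, IsOrderedAddMonoid (N i)]
    (K : Type*) [Field K]
    (X : Set (HahnSeries ((∀ i, N i))ᵒᵈ K))
    (htrunc : ∀ f ∈ X, ∀ m : ∀ i, N i,
      f.restrictSet (OrderDual.ofDual ⁻¹' {b | m < b}) ∈ X) :
    ∀ f ∈ Algebra.adjoin K X, ∀ m : ∀ i, N i,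
      f.restrictSet (OrderDual.ofDual ⁻¹' {b | m < b}) ∈ Algebra.adjoin K X := by
  classical
  have hset : ∀ m : ∀ i, N i,
      (OrderDual.ofDual ⁻¹' {b | m < b})
        = TruncAux.inte ({OrderDual.toDual m} : Finset ((∀ i, N i)ᵒᵈ)) := by
    intro m
    ext x
    simp only [Set.mem_preimage, Set.mem_setOf_eq, TruncAux.mem_inte, Finset.mem_singleton]
    constructor
    · rintro h c rfl; exact h
    · intro h; exact h _ rfl
  have htr : ∀ x ∈ X, ∀ c : (∀ i, N i)ᵒᵈ, x.restrictSet {y | y < c} ∈ X := by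
    intro x hx c
    have h2 : {y : (∀ i, N i)ᵒᵈ | y < c}
        = OrderDual.ofDual ⁻¹' {b | OrderDual.ofDual c < b} := rfl
    rw [h2]
    exact htrunc x hx _
  intro f hf m
  rw [hset m]
  exact TruncAux.master htr f hf _
end

section
/- Let 𝕂 be a field, 𝔐 a linearly ordered Abelian group (written multiplicatively), and X ⊆ 𝕂⟪𝔐⟫ two 𝕂-vector subspaces X and Y of the Hahn field, each closed under segments. Then the product set {f · g : f ∈ X, g ∈ Y} is closed under truncations, in the sense that every truncation (f·g)|𝔪 is a finite sum Σ_{i<n} f_i · g_i with f_i ∈ X and g_i ∈ Y. -/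
section Aux

variable {Δ K : Type*} [AddCommGroup Δ] [LinearOrder Δ] [IsOrderedAddMonoid Δ] [Field K]

lemma coeff_restrictSet (f : HahnSeries Δ K) (S : Set Δ) (a : Δ) :
    (f.restrictSet S).coeff a = S.indicator f.coeff a := rfl

lemma support_restrictSet_subset (f : HahnSeries Δ K) (S : Set Δ) :
    (f.restrictSet S).support ⊆ f.support := by
  intro a ha
  simp only [HahnSeries.mem_support, coeff_restrictSet] at ha ⊢
  intro h
  exact ha (Set.indicator_apply_eq_zero.2 fun _ => h)

lemma mul_coeff_subset {x y : HahnSeries Δ K} {s t : Set Δ} (hs : s.IsPWO) (ht : t.IsPWO)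
    (hxs : x.support ⊆ s) (hyt : y.support ⊆ t) (c : Δ) :
    (x * y).coeff c = ∑ ij ∈ Finset.addAntidiagonal hs ht c, x.coeff ij.1 * y.coeff ij.2 := by
  rw [HahnSeries.coeff_mul_right' ht hyt]
  apply Finset.sum_subset (Finset.addAntidiagonal_mono_left hxs)
  intro ij hij hij'
  have hz : x.coeff ij.1 = 0 := by
    by_contra h
    apply hij'
    rw [Finset.mem_addAntidiagonal] at hij ⊢
    exact ⟨h, hij.2.1, hij.2.2⟩
  rw [hz, zero_mul]

lemma image_phi_finite (f g : HahnSeries Δ K) (m : Δ) :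
    ((fun b => f.support ∩ {a | a + b < m}) '' g.support).Finite := by
  set φ : Δ → Set Δ := fun b => f.support ∩ {a | a + b < m} with hφ
  by_contra hinf
  have hinf' : ((fun b => f.support ∩ {a | a + b < m}) '' g.support).Infinite := hinf
  set e := hinf'.natEmbedding with he
  have hsel : ∀ n : ℕ, ∃ b, b ∈ g.support ∧ φ b = (e n : Set Δ) := by
    intro n
    rcases (e n).2 with ⟨b, hb, hb'⟩
    exact ⟨b, hb, hb'⟩
  choose b hbG hbe using hsel
  have hbinj : Function.Injective b := by
    intro i j hij
    apply e.injective
    apply Subtype.val_injective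
    rw [← hbe i, ← hbe j, hij]
  obtain ⟨σ, hσ⟩ := g.isPWO_support.exists_monotone_subseq hbG
  have hcsm : StrictMono (b ∘ σ) := hσ.strictMono_of_injective (hbinj.comp σ.injective)
  have hanti : ∀ {x y : Δ}, x ≤ y → φ y ⊆ φ x := by
    intro x y hxy a ha
    exact ⟨ha.1, lt_of_le_of_lt (add_le_add_right hxy a) ha.2⟩
  have hne : ∀ n : ℕ, ∃ a, a ∈ φ (b (σ n)) ∧ a ∉ φ (b (σ (n + 1))) := by
    intro n
    have hsub : φ (b (σ (n + 1))) ⊆ φ (b (σ n)) := hanti (hcsm (Nat.lt_succ_self n)).le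
    have hneq : φ (b (σ (n + 1))) ≠ φ (b (σ n)) := by
      intro h
      have : (e (σ (n + 1)) : Set Δ) = (e (σ n) : Set Δ) := by
        rw [← hbe, ← hbe, h]
      have := e.injective (Subtype.val_injective this)
      exact absurd (σ.injective this) (by omega)
    obtain ⟨x, hx1, hx2⟩ := Set.exists_of_ssubset (hsub.ssubset_of_ne hneq)
    exact ⟨x, hx1, hx2⟩
  choose a ha ha' using hne
  have hanti2 : StrictAnti a := by
    apply strictAnti_nat_of_succ_lt
    intro n
    have h1 : a (n + 1) + b (σ (n + 1)) < m := (ha (n + 1)).2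
    have h2 : ¬ a n + b (σ (n + 1)) < m := by
      intro h
      exact ha' n ⟨(ha n).1, h⟩
    have := lt_of_lt_of_le h1 (not_lt.1 h2)
    exact lt_of_add_lt_add_right this
  exact Set.isWF_iff_no_descending_seq.1 f.isWF_support a hanti2 (fun n => (ha n).1)

lemma key (X Y : Submodule K (HahnSeries Δ K))
    (hX : ∀ f ∈ X, ∀ S : Set Δ, S.OrdConnected → f.restrictSet S ∈ X)
    (hY : ∀ g ∈ Y, ∀ S : Set Δ, S.OrdConnected → g.restrictSet S ∈ Y)
    (f : HahnSeries Δ K) (hf : f ∈ X) (g : HahnSeries Δ K) (hg : g ∈ Y) (m : Δ) :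
    ∃ (n : ℕ) (u v : Fin n → HahnSeries Δ K),
      (∀ i, u i ∈ X) ∧ (∀ i, v i ∈ Y) ∧
      (f * g).restrictSet {c | c < m} = ∑ i, u i * v i := by
  classical
  set φ : Δ → Set Δ := fun b => f.support ∩ {a | a + b < m} with hφ
  have hanti : ∀ {x y : Δ}, x ≤ y → φ y ⊆ φ x := by
    intro x y hxy a ha
    exact ⟨ha.1, lt_of_le_of_lt (add_le_add_right hxy a) ha.2⟩
  have hfin : (φ '' g.support).Finite := image_phi_finite f g m
  set n := hfin.toFinset.card with hn
  set E := hfin.toFinset.equivFin with hE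
  set V : Fin n → Set Δ := fun i => (E.symm i : Set Δ) with hV
  have hVinj : Function.Injective V := fun i j h =>
    E.symm.injective (Subtype.val_injective h)
  have hsel : ∀ i, ∃ bb, bb ∈ g.support ∧ φ bb = V i := by
    intro i
    have := (E.symm i).2
    rw [Set.Finite.mem_toFinset] at this
    rcases this with ⟨bb, hbb, hbb'⟩
    exact ⟨bb, hbb, hbb'⟩
  choose b hbG hbV using hsel
  set u : Fin n → HahnSeries Δ K := fun i => f.restrictSet {a | a + b i < m} with hu
  set v : Fin n → HahnSeries Δ K := fun i => g.restrictSet {x | φ x = V i} with hv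
  refine ⟨n, u, v, ?_, ?_, ?_⟩
  · intro i
    exact hX f hf _ ⟨fun x _ y hy z hz => lt_of_le_of_lt (add_le_add_left hz.2 _) hy⟩
  · intro i
    apply hY g hg
    refine ⟨fun x hx y hy z hz => ?_⟩
    have h1 : φ y ⊆ φ z := hanti hz.2
    have h2 : φ z ⊆ φ x := hanti hz.1
    show φ z = V i
    exact Set.Subset.antisymm (hx ▸ h2) (hy ▸ h1)
  · ext c
    rw [show (∑ i, u i * v i).coeff c = ∑ i, (u i * v i).coeff c from
      map_sum (HahnSeries.coeff.addMonoidHom c) _ _]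
    have hrw : ∀ i : Fin n, (u i * v i).coeff c =
        ∑ ij ∈ Finset.addAntidiagonal f.isPWO_support g.isPWO_support c,
          (u i).coeff ij.1 * (v i).coeff ij.2 := fun i =>
      mul_coeff_subset f.isPWO_support g.isPWO_support
        (support_restrictSet_subset f _) (support_restrictSet_subset g _) c
    rw [Finset.sum_congr rfl fun i _ => hrw i, Finset.sum_comm]
    have inner : ∀ ij ∈ Finset.addAntidiagonal f.isPWO_support g.isPWO_support c,
        (∑ i, (u i).coeff ij.1 * (v i).coeff ij.2) =
          if c < m then f.coeff ij.1 * g.coeff ij.2 else 0 := by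
      rintro ⟨a, bb⟩ hij
      replace hij := Finset.mem_addAntidiagonal.1 hij
      obtain ⟨haF, hbG', habc⟩ := hij
      obtain ⟨i₀, hi₀⟩ : ∃ i, V i = φ bb := by
        have hmem : φ bb ∈ hfin.toFinset := by
          rw [Set.Finite.mem_toFinset]; exact ⟨bb, hbG', rfl⟩
        exact ⟨E ⟨_, hmem⟩, by simp [hV]⟩
      rw [Finset.sum_eq_single i₀]
      · have hvv : (v i₀).coeff bb = g.coeff bb := by
          rw [hv]
          simp only [coeff_restrictSet]
          rw [Set.indicator_of_mem]
          exact hi₀.symm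
        rw [hvv]
        have hphi : φ (b i₀) = φ bb := (hbV i₀).trans hi₀
        have himp : ∀ x y : Δ, φ x = φ y → a + x < m → a + y < m := by
          intro x y hxy h
          have : a ∈ φ y := hxy ▸ (⟨haF, h⟩ : a ∈ φ x)
          exact this.2
        have hiff : (a + b i₀ < m) ↔ (c < m) := by
          rw [← habc]
          exact ⟨himp _ _ hphi, himp _ _ hphi.symm⟩
        rw [hu]
        simp only [coeff_restrictSet, Set.indicator_apply, Set.mem_setOf_eq]
        rw [if_congr hiff rfl rfl, ite_mul, zero_mul]
      · intro i _ hne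
        have hz : (v i).coeff bb = 0 := by
          rw [hv]
          simp only [coeff_restrictSet]
          rw [Set.indicator_of_notMem]
          intro h
          exact hne (hVinj ((h : φ bb = V i).symm.trans hi₀.symm))
        rw [hz, mul_zero]
      · intro h
        exact absurd (Finset.mem_univ i₀) h
    rw [Finset.sum_congr rfl inner]
    rw [coeff_restrictSet, Set.indicator_apply, HahnSeries.coeff_mul]
    simp only [Set.mem_setOf_eq]
    split_ifs with hcm
    · rfl
    · simp

end Aux

/-- Let `𝕂` be a field, `Γ` a linearly ordered Abelian group (an additive copy of the
multiplicative group `𝔐` of monomials; supports are reverse well ordered, encoded via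
the order dual) and `X`, `Y` two `𝕂`-subspaces of the Hahn field `𝕂⟪𝔐⟫`, each closed
under segments.  Then every truncation `(f·g)|𝔪` of a product, `f ∈ X`, `g ∈ Y`, is a
finite sum `Σ_{i<n} fᵢ·gᵢ` with `fᵢ ∈ X`, `gᵢ ∈ Y`. -/
theorem truncation_of_product_of_segmentClosed_subspaces
    {Γ K : Type*} [AddCommGroup Γ] [LinearOrder Γ] [IsOrderedAddMonoid Γ] [Field K]
    (X Y : Submodule K (HahnSeries Γᵒᵈ K))
    (hX : ∀ f ∈ X, ∀ S : Set Γ, S.OrdConnected →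
      f.restrictSet (OrderDual.ofDual ⁻¹' S) ∈ X)
    (hY : ∀ g ∈ Y, ∀ S : Set Γ, S.OrdConnected →
      g.restrictSet (OrderDual.ofDual ⁻¹' S) ∈ Y) :
    ∀ f ∈ X, ∀ g ∈ Y, ∀ m : Γ,
      ∃ (n : ℕ) (u v : Fin n → HahnSeries Γᵒᵈ K),
        (∀ i, u i ∈ X) ∧ (∀ i, v i ∈ Y) ∧
        (f * g).restrictSet (OrderDual.ofDual ⁻¹' {b | m < b}) = ∑ i, u i * v i := by
  intro f hf g hg m
  have hX' : ∀ f ∈ X, ∀ S : Set Γᵒᵈ, S.OrdConnected → f.restrictSet S ∈ X := by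
    intro f hf S hS
    have hS' : (OrderDual.toDual ⁻¹' S : Set Γ).OrdConnected :=
      ⟨fun x hx y hy z hz => hS.out hy hx ⟨hz.2, hz.1⟩⟩
    exact hX f hf _ hS'
  have hY' : ∀ g ∈ Y, ∀ S : Set Γᵒᵈ, S.OrdConnected → g.restrictSet S ∈ Y := by
    intro g hg S hS
    have hS' : (OrderDual.toDual ⁻¹' S : Set Γ).OrdConnected :=
      ⟨fun x hx y hy z hz => hS.out hy hx ⟨hz.2, hz.1⟩⟩
    exact hY g hg _ hS'
  exact key X Y hX' hY' f hf g hg (OrderDual.toDual m)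
end

section
/- Let ℱ be a truncation-closed family of generalized power series (over an ordered field 𝕂 with exponents in an ordered field Λ) that is closed under the renormalized derivative operations f(x₀,…,x_{n−1}) ↦ x_i ∂_{x_i} f. Then the algebra of generalized power series generated by ℱ (closure under 𝕂-algebra operations and variable reindexings) is almost fine; in particular it is truncation-closed. -/
open Classical

section

variable {Λ K : Type*} [Field Λ] [LinearOrder Λ] [IsStrictOrderedRing Λ]
  [Field K] [LinearOrder K] [IsStrictOrderedRing K]

/-- Generalized power series in `n` variables, coefficients in `𝕂`, exponents in `Λ`. -/
abbrev GSer (Λ K : Type*) [Field Λ] [LinearOrder Λ] [IsStrictOrderedRing Λ]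
    [Field K] [LinearOrder K] [IsStrictOrderedRing K] (n : ℕ) :=
  HahnSeries (Fin n → Λ) K

/-- Partial truncation: keep the monomials `x^γ` with `γ i < α`. -/
noncomputable def ptrunc {n : ℕ} (i : Fin n) (α : Λ) (f : GSer Λ K n) : GSer Λ K n :=
  f.restrictSet {γ | γ i < α}

/-- The coordinate projection `x_i` as a generalized power series. -/
noncomputable def gproj {n : ℕ} (i : Fin n) : GSer Λ K n :=
  HahnSeries.single (Pi.single i (1 : Λ)) (1 : K)

/-- The renormalized derivative `x_i ∂_{x_i} f`. -/
noncomputable def rder (ι : Λ →+* K) {n : ℕ} (i : Fin n) (f : GSer Λ K n) :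
    GSer Λ K n :=
  ⟨fun γ => ι (γ i) * f.coeff γ, f.isPWO_support'.mono (fun γ hγ => by
    simp only [Function.mem_support] at hγ ⊢
    exact fun h => hγ (by rw [h, mul_zero]))⟩

/-- `h` is the reindexing `σ(f)` of `f` along `σ : x → y` (possibly identifying
variables): the coefficient of `y^γ` in `σ(f)` is the sum of the coefficients of the
`x^δ` with pushforward `σ_*(δ) = γ`. -/
noncomputable def IsReindex {k n : ℕ} (σ : Fin k → Fin n) (f : GSer Λ K k)
    (h : GSer Λ K n) : Prop :=
  ∀ γ : Fin n → Λ,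
    h.coeff γ = ∑ᶠ δ : Fin k → Λ,
      if (fun j => ∑ i ∈ Finset.univ.filter (fun i => σ i = j), δ i) = γ then
        f.coeff δ
      else 0

/-- A family all of whose members are `𝕂`-subalgebras. -/
def IsSubalgFam (G : ∀ n : ℕ, Set (GSer Λ K n)) : Prop :=
  ∀ n, ∃ A : Subalgebra K (GSer Λ K n), (A : Set (GSer Λ K n)) = G n

/-- Closure under variable reindexings. -/
def ReindexClosed (G : ∀ n : ℕ, Set (GSer Λ K n)) : Prop :=
  ∀ (k n : ℕ) (σ : Fin k → Fin n), ∀ f ∈ G k,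
    ∀ h : GSer Λ K n, IsReindex σ f h → h ∈ G n

/-- The algebra of generalized power series generated by the family `ℱ`: the smallest
family of `𝕂`-subalgebras containing `ℱ` and closed under variable reindexings. -/
def GenAlg (F : ∀ n : ℕ, Set (GSer Λ K n)) (n : ℕ) : Set (GSer Λ K n) :=
  {f | ∀ G : ∀ n : ℕ, Set (GSer Λ K n),
    IsSubalgFam G → ReindexClosed G → (∀ m, F m ⊆ G m) → f ∈ G n}


/-! ### Basics on `restrictSet` -/

namespace HahnSeries

variable {Γ R : Type*} [PartialOrder Γ]

@[simp] theorem restrictSet_coeff [Zero R] (f : HahnSeries Γ R) (S : Set Γ) (γ : Γ) :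
    (f.restrictSet S).coeff γ = if γ ∈ S then f.coeff γ else 0 := by
  simp [restrictSet, Set.indicator]

theorem restrictSet_restrictSet [Zero R] (f : HahnSeries Γ R) (S T : Set Γ) :
    (f.restrictSet S).restrictSet T = f.restrictSet (S ∩ T) := by
  ext γ
  simp only [restrictSet_coeff, Set.mem_inter_iff]
  by_cases h1 : γ ∈ S <;> by_cases h2 : γ ∈ T <;> simp [h1, h2]

@[simp] theorem restrictSet_univ [Zero R] (f : HahnSeries Γ R) :
    f.restrictSet Set.univ = f := by
  ext γ; simp

@[simp] theorem restrictSet_zero [Zero R] (S : Set Γ) :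
    (0 : HahnSeries Γ R).restrictSet S = 0 := by
  ext γ; simp

theorem restrictSet_add [AddMonoid R] (f g : HahnSeries Γ R) (S : Set Γ) :
    (f + g).restrictSet S = f.restrictSet S + g.restrictSet S := by
  ext γ
  by_cases h : γ ∈ S <;> simp [h]

theorem restrictSet_smul {k : Type*} [Zero R] [SMulZeroClass k R] (c : k)
    (f : HahnSeries Γ R) (S : Set Γ) :
    (c • f).restrictSet S = c • f.restrictSet S := by
  ext γ
  by_cases h : γ ∈ S <;> simp [h]

theorem restrictSet_support_subset [Zero R] (f : HahnSeries Γ R) (S : Set Γ) :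
    (f.restrictSet S).support ⊆ f.support := by
  intro γ hγ
  simp only [mem_support, restrictSet_coeff] at hγ ⊢
  intro h; apply hγ; rw [h]; simp

end HahnSeries

/-! ### Well-foundedness helpers and the rectangle lemma -/

theorem list_bind_sum {α β M : Type*} [AddCommMonoid M] (l : List α) (g : α → List β)
    (F : β → M) :
    ((l.flatMap g).map F).sum = (l.map fun a => ((g a).map F).sum).sum := by
  induction l with
  | nil => simp
  | cons a l ih => simp [List.flatMap_cons, ih]

section Rect

variable {Λ : Type*} [Field Λ] [LinearOrder Λ] [IsStrictOrderedRing Λ]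

theorem exists_strictMono_of_infinite {A : Set Λ} (hA : A.IsWF) (h : A.Infinite) :
    ∃ g : ℕ → Λ, StrictMono g ∧ ∀ n, g n ∈ A := by
  let f := Set.Infinite.natEmbedding A h
  obtain ⟨φ, hφ⟩ := hA.isPWO.exists_monotone_subseq (f := fun n => (f n : Λ)) (fun n => (f n).2)
  refine ⟨fun n => (f (φ n) : Λ), ?_, fun n => (f (φ n)).2⟩
  refine Monotone.strictMono_of_injective hφ ?_
  intro a b hab
  exact φ.injective (f.injective (Subtype.coe_injective hab))

theorem no_strictAnti_seq {A : Set Λ} (hA : A.IsWF) (g : ℕ → Λ) (hg : StrictAnti g)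
    (hmem : ∀ n, g n ∈ A) : False := by
  rw [Set.isWF_iff_no_descending_seq] at hA
  exact hA g hg fun n => hmem n

/-- The key finiteness lemma: the family of lower cuts of `B` induced by `α - s`,
`s ∈ A`, is finite. -/
theorem seg_image_finite {A B : Set Λ} (hA : A.IsWF) (hB : B.IsWF) (α : Λ) :
    ((fun s => B ∩ Set.Iio (α - s)) '' A).Finite := by
  set V := (fun s => B ∩ Set.Iio (α - s)) '' A with hVdef
  have key : ∀ v ∈ V, v = B ∨ ∃ b ∈ B, v = B ∩ Set.Iio b := by
    rintro v ⟨s, hs, rfl⟩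
    by_cases hne : (B ∩ {t | α - s ≤ t}).Nonempty
    · right
      have hwf : (B ∩ {t | α - s ≤ t}).IsWF := hB.mono Set.inter_subset_left
      refine ⟨hwf.min hne, (hwf.min_mem hne).1, ?_⟩
      have hbge : α - s ≤ hwf.min hne := (hwf.min_mem hne).2
      ext t
      simp only [Set.mem_inter_iff, Set.mem_Iio]
      constructor
      · rintro ⟨htB, htlt⟩; exact ⟨htB, lt_of_lt_of_le htlt hbge⟩
      · rintro ⟨htB, htlt⟩
        refine ⟨htB, ?_⟩
        by_contra hcon
        exact absurd htlt (not_lt.2 (hwf.min_le hne ⟨htB, not_lt.1 hcon⟩))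
    · left
      ext t
      simp only [Set.mem_inter_iff, Set.mem_Iio]
      constructor
      · exact fun h => h.1
      · intro htB
        refine ⟨htB, ?_⟩
        by_contra hcon
        exact hne ⟨t, htB, not_lt.1 hcon⟩
  set E := {b ∈ B | B ∩ Set.Iio b ∈ V} with hEdef
  have hEfin : E.Finite := by
    by_contra hinf
    obtain ⟨g, hg, hgmem⟩ :=
      exists_strictMono_of_infinite (hB.mono (Set.sep_subset _ _)) hinf
    have hchoice : ∀ n : ℕ, ∃ s ∈ A, B ∩ Set.Iio (g n) = B ∩ Set.Iio (α - s) := by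
      intro n
      obtain ⟨s, hsA, hv⟩ := (hgmem n).2
      exact ⟨s, hsA, hv.symm⟩
    choose sfun hsA hseq using hchoice
    have hanti : StrictAnti sfun := by
      refine strictAnti_nat_of_succ_lt fun n => ?_
      have h1 : g n < α - sfun (n + 1) := by
        have : g n ∈ B ∩ Set.Iio (g (n + 1)) :=
          ⟨(hgmem n).1, hg (Nat.lt_succ_self n)⟩
        rw [hseq (n + 1)] at this
        exact this.2
      have h2 : α - sfun n ≤ g n := by
        have : g n ∉ B ∩ Set.Iio (g n) := fun h => lt_irrefl _ h.2
        rw [hseq n] at this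
        by_contra hcon
        exact this ⟨(hgmem n).1, not_le.1 hcon⟩
      linarith
    exact no_strictAnti_seq hA sfun hanti hsA
  have hsub : V ⊆ insert B ((fun b => B ∩ Set.Iio b) '' E) := by
    intro v hv
    rcases key v hv with h | ⟨b, hbB, rfl⟩
    · exact h ▸ Set.mem_insert _ _
    · exact Set.mem_insert_of_mem _ ⟨b, ⟨hbB, hv⟩, rfl⟩
  exact ((hEfin.image _).insert B).subset hsub

variable (K : Type*) [Field K] [LinearOrder K] [IsStrictOrderedRing K]

/-- Indicator of an optional lower cut. -/
noncomputable def oInd (o : Option Λ) (s : Λ) : K :=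
  match o with
  | none => 1
  | some c => if s < c then 1 else 0

variable {K}

theorem exists_cut {A L : Set Λ} (hA : A.IsWF) (hLA : L ⊆ A)
    (hlow : ∀ s ∈ L, ∀ s' ∈ A, s' ≤ s → s' ∈ L) :
    ∃ o : Option Λ, ∀ s ∈ A, oInd K o s = if s ∈ L then (1 : K) else 0 := by
  by_cases h : (A \ L).Nonempty
  · have hwf := hA.mono (Set.diff_subset (t := L))
    refine ⟨some (hwf.min h), fun s hs => ?_⟩
    by_cases hsL : s ∈ L
    · have hlt : s < hwf.min h := by
        by_contra hcon
        exact (hwf.min_mem h).2 (hlow s hsL _ (hwf.min_mem h).1 (not_lt.1 hcon))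
      simp [oInd, hlt, hsL]
    · have hlt : ¬ s < hwf.min h := not_lt.2 (hwf.min_le h ⟨hs, hsL⟩)
      simp [oInd, hlt, hsL]
  · refine ⟨none, fun s hs => ?_⟩
    have hsL : s ∈ L := by
      by_contra hc; exact h ⟨s, hs, hc⟩
    simp [oInd, hsL]

/-- The rectangle decomposition lemma: on `A × B` the indicator of `s + t < α` is a
finite combination of products of cut indicators. -/
theorem rect2 {A B : Set Λ} (hA : A.IsWF) (hB : B.IsWF) (α : Λ) :
    ∃ L : List (K × Option Λ × Option Λ),
      ∀ s ∈ A, ∀ t ∈ B,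
        (if s + t < α then (1 : K) else 0) =
          (L.map fun p => p.1 * oInd K p.2.1 s * oInd K p.2.2 t).sum := by
  classical
  have hV := seg_image_finite hA hB α
  set seg : Λ → Set Λ := fun s => B ∩ Set.Iio (α - s) with hseg
  set V := seg '' A with hVdef
  have h1 := fun v : Set Λ => exists_cut (K := K) hA (L := {s ∈ A | v ⊆ seg s})
    (Set.sep_subset _ _) (by
      rintro s ⟨hsA, hsv⟩ s' hs' hle
      refine ⟨hs', hsv.trans fun t ht => ⟨ht.1, lt_of_lt_of_le ht.2 (by linarith)⟩⟩)
  have h2 := fun v : Set Λ => exists_cut (K := K) hA (L := {s ∈ A | v ⊂ seg s})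
    (Set.sep_subset _ _) (by
      rintro s ⟨hsA, hsv⟩ s' hs' hle
      refine ⟨hs', hsv.trans_subset fun t ht =>
        ⟨ht.1, lt_of_lt_of_le ht.2 (by linarith)⟩⟩)
  have h3 : ∀ v : Set Λ, ∃ β : Λ, v ∈ V → ∀ t ∈ B, (t ∈ v ↔ t < β) := by
    intro v
    by_cases hv : v ∈ V
    · obtain ⟨s, hs, rfl⟩ := hv
      exact ⟨α - s, fun _ t ht => ⟨fun h => h.2, fun h => ⟨ht, h⟩⟩⟩
    · exact ⟨0, fun h => absurd h hv⟩
  choose u₁ hu₁ using h1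
  choose u₂ hu₂ using h2
  choose w hw using h3
  refine ⟨hV.toFinset.toList.flatMap fun v => [((1 : K), u₁ v, w v), ((-1 : K), u₂ v, w v)], ?_⟩
  intro s hs t ht
  rw [list_bind_sum, Finset.sum_map_toList]
  have hsegmem : seg s ∈ hV.toFinset := hV.mem_toFinset.2 ⟨s, hs, rfl⟩
  rw [Finset.sum_eq_single (seg s)]
  · -- the main term
    have e1 : oInd K (u₁ (seg s)) s = 1 := by
      rw [hu₁ (seg s) s hs, if_pos]
      exact ⟨hs, subset_rfl⟩
    have e2 : oInd K (u₂ (seg s)) s = 0 := by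
      rw [hu₂ (seg s) s hs, if_neg]
      rintro ⟨-, hss⟩
      exact hss.ne rfl
    have e3 : oInd K (w (seg s)) t = if s + t < α then (1 : K) else 0 := by
      have h4 := hw (seg s) ⟨s, hs, rfl⟩ t ht
      have h5 : t ∈ seg s ↔ s + t < α := by
        constructor
        · intro h; have := h.2; simp only [Set.mem_Iio] at this; linarith
        · intro h; exact ⟨ht, by simp only [Set.mem_Iio]; linarith⟩
      simp only [oInd]
      exact if_congr (h4.symm.trans h5) rfl rfl
    simp [e1, e2, e3]
  · -- other terms vanish
    intro v hvmem hvne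
    have e1 : oInd K (u₁ v) s = if v ⊆ seg s then (1 : K) else 0 := by
      rw [hu₁ v s hs]
      by_cases hsub : v ⊆ seg s
      · rw [if_pos ⟨hs, hsub⟩, if_pos hsub]
      · rw [if_neg (fun hc => hsub hc.2), if_neg hsub]
    have e2 : oInd K (u₂ v) s = if v ⊆ seg s then (1 : K) else 0 := by
      rw [hu₂ v s hs]
      by_cases hsub : v ⊆ seg s
      · rw [if_pos ⟨hs, ⟨hsub, fun hc => hvne (subset_antisymm hsub hc)⟩⟩, if_pos hsub]
      · rw [if_neg (fun hc => hsub hc.2.1), if_neg hsub]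
    simp only [List.map_cons, List.map_nil, List.sum_cons, List.sum_nil, e1, e2]
    ring
  · intro h
    exact absurd hsegmem h

end Rect

/-! ### Boxes and the `n`-dimensional rectangle lemma -/

section Box

variable {Λ K : Type*} [Field Λ] [LinearOrder Λ] [IsStrictOrderedRing Λ] [Field K] [LinearOrder K] [IsStrictOrderedRing K] {n : ℕ}

/-- The open box described by a list of constraints `γ i < c`. -/
def boxSet {n : ℕ} (l : List (Fin n × Λ)) : Set (Fin n → Λ) :=
  {γ | ∀ p ∈ l, γ p.1 < p.2}

theorem boxSet_nil : boxSet ([] : List (Fin n × Λ)) = Set.univ := by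
  ext γ; simp [boxSet]

theorem boxSet_cons (q : Fin n × Λ) (l : List (Fin n × Λ)) :
    boxSet (q :: l) = {γ : Fin n → Λ | γ q.1 < q.2} ∩ boxSet l := by
  ext γ; simp [boxSet]

theorem boxSet_append (l l' : List (Fin n × Λ)) :
    boxSet (l ++ l') = boxSet l ∩ boxSet l' := by
  ext γ; simp [boxSet, List.mem_append, or_imp, forall_and]

/-- An optional cut in coordinate `i`, as a box. -/
def oBox (i : Fin n) (o : Option Λ) : List (Fin n × Λ) :=
  match o with
  | none => []
  | some c => [(i, c)]

theorem oInd_oBox (i : Fin n) (o : Option Λ) (γ : Fin n → Λ) :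
    oInd K o (γ i) = if γ ∈ boxSet (oBox i o) then (1 : K) else 0 := by
  cases o with
  | none => simp [oInd, oBox, boxSet]
  | some c => simp [oInd, oBox, boxSet]

theorem list_sum_map_mul_left {β : Type*} (l : List β) (f : β → K) (c : K) :
    (l.map fun b => c * f b).sum = c * (l.map f).sum := by
  induction l with
  | nil => simp
  | cons b l ih => simp [ih, mul_add]

theorem ind_inter {X : Type*} (x : X) (S T : Set X) :
    (if x ∈ S ∩ T then (1 : K) else 0) =
      (if x ∈ S then (1 : K) else 0) * (if x ∈ T then (1 : K) else 0) := by
  by_cases h1 : x ∈ S <;> by_cases h2 : x ∈ T <;> simp [Set.mem_inter_iff, h1, h2]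

/-- The `n`-dimensional rectangle lemma: on a PWO set, the indicator of
`∑_{j ∈ J} δ j < α` is a finite combination of box indicators. -/
theorem rectN {A : Set (Fin n → Λ)} (hA : A.IsPWO) (J : Finset (Fin n)) :
    ∀ α : Λ, ∃ L : List (K × List (Fin n × Λ)),
      ∀ δ ∈ A, (if ∑ j ∈ J, δ j < α then (1 : K) else 0) =
        (L.map fun p => p.1 * if δ ∈ boxSet p.2 then (1 : K) else 0).sum := by
  induction J using Finset.induction_on with
  | empty =>
    intro α
    by_cases h0 : (0 : Λ) < α
    · exact ⟨[((1 : K), [])], fun δ hδ => by simp [boxSet, h0]⟩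
    · exact ⟨[], fun δ hδ => by simp [h0]⟩
  | @insert j J' hj ih =>
    intro α
    choose LI hLI using ih
    have hA1 : ((fun δ : Fin n → Λ => δ j) '' A).IsWF :=
      (hA.image_of_monotone (fun x y hxy => hxy j)).isWF
    have hB1 : ((fun δ : Fin n → Λ => ∑ j' ∈ J', δ j') '' A).IsWF :=
      (hA.image_of_monotone (fun x y hxy => Finset.sum_le_sum fun k _ => hxy k)).isWF
    obtain ⟨Lr, hLr⟩ := rect2 (K := K) hA1 hB1 α
    refine ⟨Lr.flatMap fun p =>
      match p.2.2 with
      | none => [(p.1, oBox j p.2.1)]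
      | some c => (LI c).map fun q => (p.1 * q.1, oBox j p.2.1 ++ q.2), fun δ hδ => ?_⟩
    have hs : δ j ∈ (fun δ : Fin n → Λ => δ j) '' A := ⟨δ, hδ, rfl⟩
    have htm : (∑ j' ∈ J', δ j') ∈ (fun δ : Fin n → Λ => ∑ j' ∈ J', δ j') '' A :=
      ⟨δ, hδ, rfl⟩
    rw [Finset.sum_insert hj, hLr _ hs _ htm, list_bind_sum]
    refine congrArg List.sum (List.map_congr_left fun p hp => ?_)
    rcases p with ⟨c₀, o₁, o₂⟩
    cases o₂ with
    | none =>
      simp only [List.map_cons, List.map_nil, List.sum_cons, List.sum_nil, add_zero]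
      rw [oInd_oBox]
      simp [oInd]
    | some c =>
      simp only [List.map_map]
      have hmap : ((LI c).map
          ((fun p : K × List (Fin n × Λ) => p.1 * if δ ∈ boxSet p.2 then (1 : K) else 0) ∘
            fun q => (c₀ * q.1, oBox j o₁ ++ q.2))) =
          (LI c).map (fun q => (c₀ * (if δ ∈ boxSet (oBox j o₁) then (1 : K) else 0)) *
            (q.1 * (if δ ∈ boxSet q.2 then (1 : K) else 0))) := by
        refine List.map_congr_left fun q hq => ?_
        simp only [Function.comp_apply, boxSet_append, ind_inter]
        ring
      rw [hmap, list_sum_map_mul_left, ← hLI c δ hδ, oInd_oBox]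
      simp only [oInd]

end Box

/-! ### Reindexing -/

section Reindex

variable {Λ K : Type*} [Field Λ] [LinearOrder Λ] [IsStrictOrderedRing Λ] [Field K] [LinearOrder K] [IsStrictOrderedRing K] {k n : ℕ}

/-- Pushforward of exponents along `σ`. -/
def pushf (σ : Fin k → Fin n) (δ : Fin k → Λ) : Fin n → Λ :=
  fun j => ∑ i ∈ Finset.univ.filter (fun i => σ i = j), δ i

theorem pushf_monotone (σ : Fin k → Fin n) : Monotone (pushf (Λ := Λ) σ) :=
  fun _ _ h _ => Finset.sum_le_sum fun i _ => h i

theorem pushf_ne {σ : Fin k → Fin n} {δ δ' : Fin k → Λ} (hle : δ ≤ δ') (hne : δ ≠ δ') :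
    pushf σ δ ≠ pushf σ δ' := by
  obtain ⟨i0, hi0⟩ := Function.ne_iff.1 hne
  have hlt : δ i0 < δ' i0 := lt_of_le_of_ne (hle i0) hi0
  intro hcon
  have h1 : pushf σ δ (σ i0) < pushf σ δ' (σ i0) := by
    refine Finset.sum_lt_sum (fun i _ => hle i) ⟨i0, ?_, hlt⟩
    simp
  rw [hcon] at h1
  exact lt_irrefl _ h1

theorem fiber_finite (σ : Fin k → Fin n) (f : GSer Λ K k) (γ : Fin n → Λ) :
    {δ : Fin k → Λ | pushf σ δ = γ ∧ f.coeff δ ≠ 0}.Finite := by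
  by_contra hinf
  have hsub : {δ : Fin k → Λ | pushf σ δ = γ ∧ f.coeff δ ≠ 0} ⊆ f.support :=
    fun δ hδ => hδ.2
  let g := Set.Infinite.natEmbedding _ hinf
  obtain ⟨m, m', hmm, hle⟩ :=
    f.isPWO_support.exists_lt (f := fun i => (g i : Fin k → Λ)) (fun i => hsub (g i).2)
  have hne : (g m : Fin k → Λ) ≠ (g m' : Fin k → Λ) := by
    intro hcon
    exact (Nat.ne_of_lt hmm) (g.injective (Subtype.coe_injective hcon))
  exact pushf_ne hle hne ((g m).2.1.trans ((g m').2.1).symm)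

/-- The reindexing of a series along `σ`. -/
noncomputable def reindexFun (σ : Fin k → Fin n) (f : GSer Λ K k) : GSer Λ K n :=
  ⟨fun γ => ∑ᶠ δ : Fin k → Λ, if pushf σ δ = γ then f.coeff δ else 0, by
    have hsub : (Function.support fun γ =>
        ∑ᶠ δ : Fin k → Λ, if pushf σ δ = γ then f.coeff δ else 0) ⊆
        pushf σ '' f.support := by
      intro γ hγ
      simp only [Function.mem_support] at hγ
      by_contra him
      apply hγ
      apply finsum_eq_zero_of_forall_eq_zero
      intro δ
      by_cases hp : pushf σ δ = γ
      · rw [if_pos hp]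
        by_contra hc
        exact him ⟨δ, hc, hp⟩
      · rw [if_neg hp]
    exact (f.isPWO_support.image_of_monotone (pushf_monotone σ)).mono hsub⟩

theorem isReindex_reindexFun (σ : Fin k → Fin n) (f : GSer Λ K k) :
    IsReindex σ f (reindexFun σ f) := fun _ => rfl

theorem IsReindex.eq_reindexFun {σ : Fin k → Fin n} {f : GSer Λ K k} {h : GSer Λ K n}
    (hh : IsReindex σ f h) : h = reindexFun σ f := by
  ext γ
  exact hh γ

theorem reindexFun_coeff_sum (σ : Fin k → Fin n) (f : GSer Λ K k) (γ : Fin n → Λ)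
    (T : Finset (Fin k → Λ))
    (hT1 : ∀ δ, pushf σ δ = γ → f.coeff δ ≠ 0 → δ ∈ T)
    (hT2 : ∀ δ ∈ T, pushf σ δ = γ) :
    (reindexFun σ f).coeff γ = ∑ δ ∈ T, f.coeff δ := by
  have h0 : (reindexFun σ f).coeff γ =
      ∑ᶠ δ : Fin k → Λ, if pushf σ δ = γ then f.coeff δ else 0 := rfl
  rw [h0, finsum_eq_sum_of_support_subset _ (s := T) ?sub]
  · exact Finset.sum_congr rfl fun δ hδ => if_pos (hT2 δ hδ)
  · intro δ hδ
    simp only [Function.mem_support] at hδ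
    by_cases hp : pushf σ δ = γ
    · rw [if_pos hp] at hδ
      exact hT1 δ hp hδ
    · rw [if_neg hp] at hδ
      exact absurd rfl hδ

/-- Canonical finite fiber. -/
noncomputable def fib (σ : Fin k → Fin n) (f : GSer Λ K k) (γ : Fin n → Λ) :
    Finset (Fin k → Λ) := (fiber_finite σ f γ).toFinset

theorem mem_fib {σ : Fin k → Fin n} {f : GSer Λ K k} {γ : Fin n → Λ} {δ : Fin k → Λ} :
    δ ∈ fib σ f γ ↔ pushf σ δ = γ ∧ f.coeff δ ≠ 0 := by
  simp [fib]

theorem reindexFun_coeff (σ : Fin k → Fin n) (f : GSer Λ K k) (γ : Fin n → Λ) :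
    (reindexFun σ f).coeff γ = ∑ δ ∈ fib σ f γ, f.coeff δ :=
  reindexFun_coeff_sum σ f γ _ (fun δ h1 h2 => mem_fib.2 ⟨h1, h2⟩)
    (fun δ hδ => (mem_fib.1 hδ).1)

end Reindex

/-! ### Identities for reindexing -/

section ReindexIdent

variable {Λ K : Type*} [Field Λ] [LinearOrder Λ] [IsStrictOrderedRing Λ] [Field K] [LinearOrder K] [IsStrictOrderedRing K] {k n : ℕ}

theorem hahn_list_sum_coeff (l : List (GSer Λ K n)) (γ : Fin n → Λ) :
    l.sum.coeff γ = (l.map fun x => x.coeff γ).sum := by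
  induction l with
  | nil => simp
  | cons x l ih => simp [HahnSeries.coeff_add, ih]

theorem hahn_finset_sum_coeff {X : Type*} (s : Finset X) (g : X → GSer Λ K n)
    (γ : Fin n → Λ) :
    (∑ j ∈ s, g j).coeff γ = ∑ j ∈ s, (g j).coeff γ := by
  induction s using Finset.cons_induction with
  | empty => simp
  | cons j s hj ih => rw [Finset.sum_cons, Finset.sum_cons, HahnSeries.coeff_add, ih]

theorem list_sum_map_mul_right {β : Type*} (l : List β) (f : β → K) (c : K) :
    (l.map fun b => f b * c).sum = (l.map f).sum * c := by
  induction l with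
  | nil => simp
  | cons b l ih => simp [ih, add_mul]

theorem list_sum_finset_sum_swap {X β : Type*} (L : List β) (T : Finset X)
    (G : X → β → K) :
    ∑ δ ∈ T, (L.map (fun p => G δ p)).sum = (L.map fun p => ∑ δ ∈ T, G δ p).sum := by
  induction L with
  | nil => simp
  | cons p L ih => simp [Finset.sum_add_distrib, ih]

theorem reindexFun_add (σ : Fin k → Fin n) (f g : GSer Λ K k) :
    reindexFun σ (f + g) = reindexFun σ f + reindexFun σ g := by
  ext γ
  set T := (fib σ f γ ∪ fib σ g γ) ∪ fib σ (f + g) γ with hT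
  have h2 : ∀ δ ∈ T, pushf σ δ = γ := by
    intro δ hδ
    rcases Finset.mem_union.1 hδ with h | h
    · rcases Finset.mem_union.1 h with h | h
      · exact (mem_fib.1 h).1
      · exact (mem_fib.1 h).1
    · exact (mem_fib.1 h).1
  rw [HahnSeries.coeff_add,
    reindexFun_coeff_sum σ (f + g) γ T
      (fun δ hp hc => Finset.mem_union_right _ (mem_fib.2 ⟨hp, hc⟩)) h2,
    reindexFun_coeff_sum σ f γ T
      (fun δ hp hc => Finset.mem_union_left _
        (Finset.mem_union_left _ (mem_fib.2 ⟨hp, hc⟩))) h2,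
    reindexFun_coeff_sum σ g γ T
      (fun δ hp hc => Finset.mem_union_left _
        (Finset.mem_union_right _ (mem_fib.2 ⟨hp, hc⟩))) h2,
    ← Finset.sum_add_distrib]
  exact Finset.sum_congr rfl fun δ _ => HahnSeries.coeff_add

theorem reindexFun_smul (σ : Fin k → Fin n) (c : K) (f : GSer Λ K k) :
    reindexFun σ (c • f) = c • reindexFun σ f := by
  ext γ
  rw [HahnSeries.coeff_smul,
    reindexFun_coeff_sum σ (c • f) γ (fib σ f γ)
      (fun δ hp hc => mem_fib.2 ⟨hp, fun h0 => hc (by rw [HahnSeries.coeff_smul, h0, smul_zero])⟩)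
      (fun δ hδ => (mem_fib.1 hδ).1),
    reindexFun_coeff, smul_eq_mul, Finset.mul_sum]
  exact Finset.sum_congr rfl fun δ _ => by rw [HahnSeries.coeff_smul, smul_eq_mul]

/-- Identity (a): a one-variable truncation of a reindexed series is a finite
combination of reindexings of box truncations. -/
theorem reindexFun_restrict (σ : Fin k → Fin n) (x : GSer Λ K k) (i : Fin n) (α : Λ) :
    ∃ L : List (K × List (Fin k × Λ)),
      (reindexFun σ x).restrictSet {γ | γ i < α} =
        (L.map fun p => p.1 • reindexFun σ (x.restrictSet (boxSet p.2))).sum := by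
  obtain ⟨L, hL⟩ := rectN (K := K) x.isPWO_support (Finset.univ.filter fun j => σ j = i) α
  refine ⟨L, ?_⟩
  ext γ
  rw [HahnSeries.restrictSet_coeff, hahn_list_sum_coeff, List.map_map]
  have step : ∀ p : K × List (Fin k × Λ),
      ((fun y : GSer Λ K n => y.coeff γ) ∘
        fun p : K × List (Fin k × Λ) => p.1 • reindexFun σ (x.restrictSet (boxSet p.2))) p =
      ∑ δ ∈ fib σ x γ, p.1 * ((if δ ∈ boxSet p.2 then (1 : K) else 0) * x.coeff δ) := by
    intro p
    simp only [Function.comp_apply, HahnSeries.coeff_smul, smul_eq_mul]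
    rw [reindexFun_coeff_sum σ _ γ (fib σ x γ)
      (fun δ hp hc => mem_fib.2 ⟨hp, fun h0 => hc (by
        rw [HahnSeries.restrictSet_coeff, h0, ite_self])⟩)
      (fun δ hδ => (mem_fib.1 hδ).1), Finset.mul_sum]
    refine Finset.sum_congr rfl fun δ _ => ?_
    rw [HahnSeries.restrictSet_coeff]
    by_cases hb : δ ∈ boxSet p.2 <;> simp [hb]
  have key : ∀ δ ∈ fib σ x γ, (if γ i < α then (1 : K) else 0) * x.coeff δ =
      (L.map fun p => p.1 * ((if δ ∈ boxSet p.2 then (1 : K) else 0) * x.coeff δ)).sum := by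
    intro δ hδ
    have hγ : γ i = ∑ j ∈ Finset.univ.filter (fun j => σ j = i), δ j := by
      rw [← (mem_fib.1 hδ).1]; rfl
    by_cases hx : x.coeff δ = 0
    · rw [hx, mul_zero]
      symm
      simp [hx]
    · rw [hγ, hL δ hx, ← list_sum_map_mul_right]
      refine congrArg List.sum (List.map_congr_left fun p hp => ?_)
      ring
  have main : (if γ i < α then (1 : K) else 0) * (reindexFun σ x).coeff γ =
      (L.map ((fun y : GSer Λ K n => y.coeff γ) ∘
        fun p : K × List (Fin k × Λ) => p.1 • reindexFun σ (x.restrictSet (boxSet p.2)))).sum := by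
    rw [reindexFun_coeff, Finset.mul_sum, Finset.sum_congr rfl key,
      list_sum_finset_sum_swap L (fib σ x γ)
        (fun δ p => p.1 * ((if δ ∈ boxSet p.2 then (1 : K) else 0) * x.coeff δ))]
    exact congrArg List.sum (List.map_congr_left fun p hp => (step p).symm)
  refine Eq.trans ?_ main
  by_cases h : γ i < α
  · rw [if_pos (show γ ∈ {γ : Fin n → Λ | γ i < α} from h), if_pos h, one_mul]
  · rw [if_neg (show γ ∉ {γ : Fin n → Λ | γ i < α} from h), if_neg h, zero_mul]

/-- Identity (b): the renormalized derivative of a reindexed series. -/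
theorem rder_reindexFun (ι : Λ →+* K) (σ : Fin k → Fin n) (f : GSer Λ K k) (i : Fin n) :
    rder ι i (reindexFun σ f) =
      reindexFun σ (∑ j ∈ Finset.univ.filter (fun j => σ j = i), rder ι j f) := by
  ext γ
  have rdc : (rder ι i (reindexFun σ f)).coeff γ =
      ι (γ i) * (reindexFun σ f).coeff γ := rfl
  rw [rdc, reindexFun_coeff, Finset.mul_sum,
    reindexFun_coeff_sum σ _ γ (fib σ f γ) ?h1 (fun δ hδ => (mem_fib.1 hδ).1)]
  case h1 =>
    intro δ hp hc
    refine mem_fib.2 ⟨hp, fun h0 => hc ?_⟩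
    rw [hahn_finset_sum_coeff]
    refine Finset.sum_eq_zero fun j _ => ?_
    show ι (δ j) * f.coeff δ = 0
    rw [h0, mul_zero]
  refine Finset.sum_congr rfl fun δ hδ => ?_
  have hp := (mem_fib.1 hδ).1
  have hγ : γ i = ∑ j ∈ Finset.univ.filter (fun j => σ j = i), δ j := by
    rw [← hp]; rfl
  rw [hahn_finset_sum_coeff, hγ, map_sum, Finset.sum_mul]
  exact Finset.sum_congr rfl fun j _ => rfl

end ReindexIdent

/-! ### Products: Leibniz rule and truncation of products -/

section Product

variable {Λ K : Type*} [Field Λ] [LinearOrder Λ] [IsStrictOrderedRing Λ] [Field K] [LinearOrder K] [IsStrictOrderedRing K] {n : ℕ}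

theorem mul_coeff_subset_s18 (f g : GSer Λ K n) {s t : Set (Fin n → Λ)} (hs : s.IsPWO)
    (ht : t.IsPWO) (hfs : f.support ⊆ s) (hgt : g.support ⊆ t) (γ : Fin n → Λ) :
    (f * g).coeff γ =
      ∑ ij ∈ Finset.antidiagonal hs ht γ, f.coeff ij.1 * g.coeff ij.2 := by
  rw [HahnSeries.coeff_mul_left' hs hfs]
  refine Finset.sum_subset ?_ ?_
  · intro ij hij
    rw [Finset.mem_antidiagonal] at hij ⊢
    exact ⟨hij.1, hgt hij.2.1, hij.2.2⟩
  · intro ij hij hnot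
    rw [Finset.mem_antidiagonal] at hij hnot
    have h0 : g.coeff ij.2 = 0 := by
      by_contra hc
      exact hnot ⟨hij.1, hc, hij.2.2⟩
    rw [h0, mul_zero]

theorem rder_coeff (ι : Λ →+* K) (i : Fin n) (f : GSer Λ K n) (γ : Fin n → Λ) :
    (rder ι i f).coeff γ = ι (γ i) * f.coeff γ := rfl

theorem rder_support_subset (ι : Λ →+* K) (i : Fin n) (f : GSer Λ K n) :
    (rder ι i f).support ⊆ f.support := by
  intro γ hγ
  rw [HahnSeries.mem_support] at hγ ⊢
  intro h0
  exact hγ (by rw [rder_coeff, h0, mul_zero])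

theorem rder_add (ι : Λ →+* K) (i : Fin n) (f g : GSer Λ K n) :
    rder ι i (f + g) = rder ι i f + rder ι i g := by
  ext γ
  rw [HahnSeries.coeff_add, rder_coeff, rder_coeff, rder_coeff, HahnSeries.coeff_add,
    mul_add]

theorem rder_smul (ι : Λ →+* K) (i : Fin n) (c : K) (f : GSer Λ K n) :
    rder ι i (c • f) = c • rder ι i f := by
  ext γ
  rw [HahnSeries.coeff_smul, rder_coeff, rder_coeff, HahnSeries.coeff_smul,
    smul_eq_mul, smul_eq_mul]
  ring

theorem rder_single_zero (ι : Λ →+* K) (i : Fin n) (c : K) :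
    rder ι i (HahnSeries.single (0 : Fin n → Λ) c) = 0 := by
  ext γ
  rw [rder_coeff, HahnSeries.coeff_zero]
  by_cases hγ : γ = 0
  · subst hγ
    rw [show ((0 : Fin n → Λ)) i = (0 : Λ) from rfl, map_zero, zero_mul]
  · rw [HahnSeries.coeff_single_of_ne hγ, mul_zero]

/-- Leibniz rule for the renormalized derivative. -/
theorem rder_mul (ι : Λ →+* K) (i : Fin n) (f g : GSer Λ K n) :
    rder ι i (f * g) = rder ι i f * g + f * rder ι i g := by
  ext γ
  rw [rder_coeff, HahnSeries.coeff_add,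
    mul_coeff_subset_s18 (rder ι i f) g f.isPWO_support g.isPWO_support
      (rder_support_subset ι i f) subset_rfl γ,
    mul_coeff_subset_s18 f (rder ι i g) f.isPWO_support g.isPWO_support subset_rfl
      (rder_support_subset ι i g) γ,
    HahnSeries.coeff_mul, Finset.mul_sum, ← Finset.sum_add_distrib]
  refine Finset.sum_congr rfl fun ij hij => ?_
  rw [Finset.mem_antidiagonal] at hij
  have hγ : γ i = ij.1 i + ij.2 i := by rw [← hij.2.2]; rfl
  rw [rder_coeff, rder_coeff, hγ, map_add]
  ring

/-- Truncation of a product is a finite combination of products of truncations. -/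
theorem mul_restrict (f g : GSer Λ K n) (i : Fin n) (α : Λ) :
    ∃ L : List (K × Option Λ × Option Λ),
      (f * g).restrictSet {γ | γ i < α} =
        (L.map fun p => p.1 • (f.restrictSet (boxSet (oBox i p.2.1)) *
          g.restrictSet (boxSet (oBox i p.2.2)))).sum := by
  have hA : ((fun δ : Fin n → Λ => δ i) '' f.support).IsWF :=
    (f.isPWO_support.image_of_monotone fun x y h => h i).isWF
  have hB : ((fun δ : Fin n → Λ => δ i) '' g.support).IsWF :=
    (g.isPWO_support.image_of_monotone fun x y h => h i).isWF
  obtain ⟨L, hL⟩ := rect2 (K := K) hA hB α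
  refine ⟨L, ?_⟩
  ext γ
  rw [HahnSeries.restrictSet_coeff, hahn_list_sum_coeff, List.map_map]
  have step : ∀ p : K × Option Λ × Option Λ,
      ((fun y : GSer Λ K n => y.coeff γ) ∘ fun p : K × Option Λ × Option Λ =>
        p.1 • (f.restrictSet (boxSet (oBox i p.2.1)) *
          g.restrictSet (boxSet (oBox i p.2.2)))) p =
      ∑ ij ∈ Finset.antidiagonal f.isPWO_support g.isPWO_support γ,
        p.1 * (((if ij.1 ∈ boxSet (oBox i p.2.1) then (1 : K) else 0) * f.coeff ij.1) *
          ((if ij.2 ∈ boxSet (oBox i p.2.2) then (1 : K) else 0) * g.coeff ij.2)) := by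
    intro p
    simp only [Function.comp_apply, HahnSeries.coeff_smul, smul_eq_mul]
    rw [mul_coeff_subset_s18 _ _ f.isPWO_support g.isPWO_support
      ((HahnSeries.restrictSet_support_subset _ _))
      ((HahnSeries.restrictSet_support_subset _ _)) γ, Finset.mul_sum]
    refine Finset.sum_congr rfl fun ij _ => ?_
    rw [HahnSeries.restrictSet_coeff, HahnSeries.restrictSet_coeff]
    by_cases h1 : ij.1 ∈ boxSet (oBox i p.2.1) <;>
      by_cases h2 : ij.2 ∈ boxSet (oBox i p.2.2) <;> simp [h1, h2]
  have key : ∀ ij ∈ Finset.antidiagonal f.isPWO_support g.isPWO_support γ,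
      (if γ i < α then (1 : K) else 0) * (f.coeff ij.1 * g.coeff ij.2) =
      (L.map fun p => p.1 *
        (((if ij.1 ∈ boxSet (oBox i p.2.1) then (1 : K) else 0) * f.coeff ij.1) *
          ((if ij.2 ∈ boxSet (oBox i p.2.2) then (1 : K) else 0) * g.coeff ij.2))).sum := by
    intro ij hij
    rw [Finset.mem_antidiagonal] at hij
    have h1 : ij.1 i ∈ (fun δ : Fin n → Λ => δ i) '' f.support := ⟨ij.1, hij.1, rfl⟩
    have h2 : ij.2 i ∈ (fun δ : Fin n → Λ => δ i) '' g.support := ⟨ij.2, hij.2.1, rfl⟩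
    have hγ : γ i = ij.1 i + ij.2 i := by rw [← hij.2.2]; rfl
    rw [hγ, hL _ h1 _ h2, ← list_sum_map_mul_right]
    refine congrArg List.sum (List.map_congr_left fun p hp => ?_)
    rw [oInd_oBox, oInd_oBox]
    ring
  have main : (if γ i < α then (1 : K) else 0) * (f * g).coeff γ =
      (L.map ((fun y : GSer Λ K n => y.coeff γ) ∘ fun p : K × Option Λ × Option Λ =>
        p.1 • (f.restrictSet (boxSet (oBox i p.2.1)) *
          g.restrictSet (boxSet (oBox i p.2.2))))).sum := by
    rw [HahnSeries.coeff_mul, Finset.mul_sum, Finset.sum_congr rfl key,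
      list_sum_finset_sum_swap L (Finset.antidiagonal f.isPWO_support g.isPWO_support γ)
        (fun ij p => p.1 *
          (((if ij.1 ∈ boxSet (oBox i p.2.1) then (1 : K) else 0) * f.coeff ij.1) *
            ((if ij.2 ∈ boxSet (oBox i p.2.2) then (1 : K) else 0) * g.coeff ij.2)))]
    exact congrArg List.sum (List.map_congr_left fun p hp => (step p).symm)
  refine Eq.trans ?_ main
  by_cases h : γ i < α
  · rw [if_pos (show γ ∈ {γ : Fin n → Λ | γ i < α} from h), if_pos h, one_mul]
  · rw [if_neg (show γ ∉ {γ : Fin n → Λ | γ i < α} from h), if_neg h, zero_mul]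

end Product

/-! ### The generated algebra -/

section GenAlgBasic

variable {Λ K : Type*} [Field Λ] [LinearOrder Λ] [IsStrictOrderedRing Λ] [Field K] [LinearOrder K] [IsStrictOrderedRing K]

/-- `GenAlg F n` as a subalgebra. -/
def genAlgSubalg (F : ∀ n : ℕ, Set (GSer Λ K n)) (n : ℕ) : Subalgebra K (GSer Λ K n) where
  carrier := GenAlg F n
  mul_mem' := by
    intro a b ha hb
    intro G hG1 hG2 hG3
    obtain ⟨A, hA⟩ := hG1 n
    have haG : a ∈ (A : Set (GSer Λ K n)) := by rw [hA]; exact ha G hG1 hG2 hG3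
    have hbG : b ∈ (A : Set (GSer Λ K n)) := by rw [hA]; exact hb G hG1 hG2 hG3
    rw [← hA]
    exact A.mul_mem haG hbG
  add_mem' := by
    intro a b ha hb
    intro G hG1 hG2 hG3
    obtain ⟨A, hA⟩ := hG1 n
    have haG : a ∈ (A : Set (GSer Λ K n)) := by rw [hA]; exact ha G hG1 hG2 hG3
    have hbG : b ∈ (A : Set (GSer Λ K n)) := by rw [hA]; exact hb G hG1 hG2 hG3
    rw [← hA]
    exact A.add_mem haG hbG
  algebraMap_mem' := by
    intro c G hG1 hG2 hG3
    obtain ⟨A, hA⟩ := hG1 n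
    rw [← hA]
    exact A.algebraMap_mem c

theorem genAlg_isSubalgFam (F : ∀ n : ℕ, Set (GSer Λ K n)) : IsSubalgFam (GenAlg F) :=
  fun n => ⟨genAlgSubalg F n, rfl⟩

theorem subset_genAlg (F : ∀ n : ℕ, Set (GSer Λ K n)) (m : ℕ) : F m ⊆ GenAlg F m :=
  fun _ hf _ _ _ hG3 => hG3 m hf

theorem genAlg_reindexClosed (F : ∀ n : ℕ, Set (GSer Λ K n)) :
    ReindexClosed (GenAlg F) :=
  fun k n σ f hf h hre G h1 h2 h3 => h2 k n σ f (hf G h1 h2 h3) h hre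

variable {F : ∀ n : ℕ, Set (GSer Λ K n)} {n : ℕ}

theorem genAlg_mul_mem {f g : GSer Λ K n} (hf : f ∈ GenAlg F n) (hg : g ∈ GenAlg F n) :
    f * g ∈ GenAlg F n := (genAlgSubalg F n).mul_mem hf hg

theorem genAlg_add_mem {f g : GSer Λ K n} (hf : f ∈ GenAlg F n) (hg : g ∈ GenAlg F n) :
    f + g ∈ GenAlg F n := (genAlgSubalg F n).add_mem hf hg

theorem genAlg_zero_mem : (0 : GSer Λ K n) ∈ GenAlg F n := (genAlgSubalg F n).zero_mem

theorem genAlg_one_mem : (1 : GSer Λ K n) ∈ GenAlg F n := (genAlgSubalg F n).one_mem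

theorem genAlg_smul_mem (c : K) {f : GSer Λ K n} (hf : f ∈ GenAlg F n) :
    c • f ∈ GenAlg F n := (genAlgSubalg F n).smul_mem hf c

theorem genAlg_finset_sum_mem {X : Type*} (s : Finset X) (g : X → GSer Λ K n)
    (h : ∀ j ∈ s, g j ∈ GenAlg F n) : (∑ j ∈ s, g j) ∈ GenAlg F n :=
  by
  have hmem : (∑ j ∈ s, g j) ∈ genAlgSubalg F n :=
    sum_mem (fun j hj => (h j hj : g j ∈ genAlgSubalg F n))
  exact hmem

theorem span_subset_genAlg {S : Set (GSer Λ K n)} (hS : S ⊆ GenAlg F n) :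
    ∀ x ∈ Submodule.span K S, x ∈ GenAlg F n := by
  intro x hx
  have hle : Submodule.span K S ≤ (genAlgSubalg F n).toSubmodule :=
    Submodule.span_le.2 hS
  exact hle hx

end GenAlgBasic

section SpanClosure

variable {Λ K : Type*} [Field Λ] [LinearOrder Λ] [IsStrictOrderedRing Λ] [Field K] [LinearOrder K] [IsStrictOrderedRing K] {n : ℕ}

theorem list_comb_mem_span {S : Set (GSer Λ K n)} (L : List (K × GSer Λ K n))
    (hL : ∀ p ∈ L, p.2 ∈ S) :
    (L.map fun p => p.1 • p.2).sum ∈ Submodule.span K S := by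
  induction L with
  | nil => simp only [List.map_nil, List.sum_nil]; exact Submodule.zero_mem _
  | cons p L ih =>
    simp only [List.map_cons, List.sum_cons]
    exact Submodule.add_mem _
      (Submodule.smul_mem _ _ (Submodule.subset_span (hL p (List.mem_cons_self))))
      (ih fun q hq => hL q (List.mem_cons_of_mem p hq))

theorem span_restrict_halfspace_closed {S : Set (GSer Λ K n)}
    (hS : ∀ y ∈ S, ∀ (i : Fin n) (α : Λ), ∃ L : List (K × GSer Λ K n),
      (∀ p ∈ L, p.2 ∈ S) ∧
      y.restrictSet {γ | γ i < α} = (L.map fun p => p.1 • p.2).sum) :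
    ∀ x ∈ Submodule.span K S, ∀ (i : Fin n) (α : Λ),
      x.restrictSet {γ | γ i < α} ∈ Submodule.span K S := by
  intro x hx
  induction hx using Submodule.span_induction with
  | mem y hy =>
    intro i α
    obtain ⟨L, hL, heq⟩ := hS y hy i α
    rw [heq]
    exact list_comb_mem_span L hL
  | zero =>
    intro i α
    rw [HahnSeries.restrictSet_zero]
    exact Submodule.zero_mem _
  | add a b ha hb iha ihb =>
    intro i α
    rw [HahnSeries.restrictSet_add]
    exact Submodule.add_mem _ (iha i α) (ihb i α)
  | smul c a ha iha =>
    intro i α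
    rw [HahnSeries.restrictSet_smul]
    exact Submodule.smul_mem _ _ (iha i α)

theorem span_restrict_box_closed {S : Set (GSer Λ K n)}
    (hS : ∀ y ∈ S, ∀ (i : Fin n) (α : Λ), ∃ L : List (K × GSer Λ K n),
      (∀ p ∈ L, p.2 ∈ S) ∧
      y.restrictSet {γ | γ i < α} = (L.map fun p => p.1 • p.2).sum) :
    ∀ x ∈ Submodule.span K S, ∀ l : List (Fin n × Λ),
      x.restrictSet (boxSet l) ∈ Submodule.span K S := by
  intro x hx l
  induction l with
  | nil =>
    rw [boxSet_nil, HahnSeries.restrictSet_univ]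
    exact hx
  | cons q l ih =>
    rw [boxSet_cons, Set.inter_comm, ← HahnSeries.restrictSet_restrictSet]
    exact span_restrict_halfspace_closed hS _ ih q.1 q.2

end SpanClosure

/-! ### Small auxiliary lemmas and the main theorem -/

section Small

variable {Λ K : Type*} [Field Λ] [LinearOrder Λ] [IsStrictOrderedRing Λ] [Field K] [LinearOrder K] [IsStrictOrderedRing K] {n : ℕ}

theorem boxSet_single (i : Fin n) (α : Λ) :
    boxSet [(i, α)] = {γ : Fin n → Λ | γ i < α} := by
  ext γ; simp [boxSet]

theorem rder_zero (ι : Λ →+* K) (i : Fin n) : rder ι i (0 : GSer Λ K n) = 0 := by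
  ext γ; rw [rder_coeff]; simp

theorem single_zero_restrict (c : K) (S : Set (Fin n → Λ)) :
    (HahnSeries.single (0 : Fin n → Λ) c).restrictSet S =
      if (0 : Fin n → Λ) ∈ S then HahnSeries.single (0 : Fin n → Λ) c else 0 := by
  by_cases h0 : (0 : Fin n → Λ) ∈ S
  · rw [if_pos h0]
    ext γ
    rw [HahnSeries.restrictSet_coeff]
    by_cases hγ : γ = (0 : Fin n → Λ)
    · subst hγ; rw [if_pos h0]
    · rw [HahnSeries.coeff_single_of_ne hγ, ite_self]
  · rw [if_neg h0]
    ext γ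
    rw [HahnSeries.restrictSet_coeff, HahnSeries.coeff_zero]
    by_cases hγ : γ = (0 : Fin n → Λ)
    · subst hγ; rw [if_neg h0]
    · rw [HahnSeries.coeff_single_of_ne hγ, ite_self]

theorem restrict_box_mem_F (F : ∀ n : ℕ, Set (GSer Λ K n))
    (htr : ∀ (n : ℕ), ∀ f ∈ F n, ∀ (i : Fin n) (α : Λ), ptrunc i α f ∈ F n)
    {m : ℕ} {f : GSer Λ K m} (hf : f ∈ F m) (l : List (Fin m × Λ)) :
    f.restrictSet (boxSet l) ∈ F m := by
  induction l with
  | nil => rw [boxSet_nil, HahnSeries.restrictSet_univ]; exact hf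
  | cons q l ih =>
    rw [boxSet_cons, Set.inter_comm, ← HahnSeries.restrictSet_restrictSet]
    exact htr m _ ih q.1 q.2

end Small


/-- If `ℱ` is a truncation-closed family of generalized power series containing the
coordinate projections and closed under the renormalized derivatives
`f ↦ x_i ∂_{x_i} f`, then the algebra generated by `ℱ` is almost fine: it is a family
of subalgebras closed under partial truncations, containing the coordinate projections
and closed under renormalized derivatives; in particular it is truncation-closed. -/
theorem genAlg_almost_fine (ι : Λ →+* K) (hι : Monotone ι)
    (F : ∀ n : ℕ, Set (GSer Λ K n))
    (hproj : ∀ (n : ℕ) (i : Fin n), gproj i ∈ F n)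
    (htr : ∀ (n : ℕ), ∀ f ∈ F n, ∀ (i : Fin n) (α : Λ), ptrunc i α f ∈ F n)
    (hder : ∀ (n : ℕ), ∀ f ∈ F n, ∀ i : Fin n, rder ι i f ∈ F n) :
    IsSubalgFam (GenAlg F) ∧
    (∀ (n : ℕ), ∀ f ∈ GenAlg F n, ∀ (i : Fin n) (α : Λ),
      ptrunc i α f ∈ GenAlg F n) ∧
    (∀ (n : ℕ) (i : Fin n), gproj i ∈ GenAlg F n) ∧
    (∀ (n : ℕ), ∀ f ∈ GenAlg F n, ∀ i : Fin n, rder ι i f ∈ GenAlg F n) := by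
  set G : ∀ m : ℕ, Set (GSer Λ K m) := fun m =>
    {f | (∀ l : List (Fin m × Λ), f.restrictSet (boxSet l) ∈ GenAlg F m) ∧
         ∀ i : Fin m, rder ι i f ∈ GenAlg F m} with hGdef
  have hFG : ∀ m, F m ⊆ G m := by
    intro m f hf
    exact ⟨fun l => subset_genAlg F m (restrict_box_mem_F F htr hf l),
           fun i => subset_genAlg F m (hder m f hf i)⟩
  have hGalg : IsSubalgFam G := by
    intro m
    have hmul : ∀ {a b : GSer Λ K m}, a ∈ G m → b ∈ G m → a * b ∈ G m := by
      intro a b ha hb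
      have haG : a ∈ GenAlg F m := by
        have := ha.1 []
        rwa [boxSet_nil, HahnSeries.restrictSet_univ] at this
      have hbG : b ∈ GenAlg F m := by
        have := hb.1 []
        rwa [boxSet_nil, HahnSeries.restrictSet_univ] at this
      constructor
      · set S : Set (GSer Λ K m) := {y | ∃ b1 b2 : List (Fin m × Λ),
            y = a.restrictSet (boxSet b1) * b.restrictSet (boxSet b2)} with hSdef
        have hSsub : S ⊆ GenAlg F m := by
          rintro y ⟨b1, b2, rfl⟩
          exact genAlg_mul_mem (ha.1 b1) (hb.1 b2)
        have hS : ∀ y ∈ S, ∀ (i : Fin m) (α : Λ), ∃ L : List (K × GSer Λ K m),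
            (∀ p ∈ L, p.2 ∈ S) ∧
            y.restrictSet {γ | γ i < α} = (L.map fun p => p.1 • p.2).sum := by
          rintro y ⟨b1, b2, rfl⟩ i α
          obtain ⟨L, hL⟩ :=
            mul_restrict (a.restrictSet (boxSet b1)) (b.restrictSet (boxSet b2)) i α
          refine ⟨L.map fun p => (p.1, a.restrictSet (boxSet (b1 ++ oBox i p.2.1)) *
            b.restrictSet (boxSet (b2 ++ oBox i p.2.2))), ?_, ?_⟩
          · intro p hp
            obtain ⟨q, hq, rfl⟩ := List.mem_map.1 hp
            exact ⟨b1 ++ oBox i q.2.1, b2 ++ oBox i q.2.2, rfl⟩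
          · rw [hL, List.map_map]
            refine congrArg List.sum (List.map_congr_left fun p hp => ?_)
            simp only [Function.comp_apply]
            rw [HahnSeries.restrictSet_restrictSet, HahnSeries.restrictSet_restrictSet,
              boxSet_append, boxSet_append]
        have hmem : a * b ∈ Submodule.span K S := Submodule.subset_span
          ⟨[], [], by rw [boxSet_nil, HahnSeries.restrictSet_univ,
            HahnSeries.restrictSet_univ]⟩
        intro l
        exact span_subset_genAlg hSsub _ (span_restrict_box_closed hS _ hmem l)
      · intro i
        rw [rder_mul]
        exact genAlg_add_mem (genAlg_mul_mem (ha.2 i) hbG) (genAlg_mul_mem haG (hb.2 i))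
    have hadd : ∀ {a b : GSer Λ K m}, a ∈ G m → b ∈ G m → a + b ∈ G m := by
      intro a b ha hb
      constructor
      · intro l
        rw [HahnSeries.restrictSet_add]
        exact genAlg_add_mem (ha.1 l) (hb.1 l)
      · intro i
        rw [rder_add]
        exact genAlg_add_mem (ha.2 i) (hb.2 i)
    have halg : ∀ c : K, algebraMap K (GSer Λ K m) c ∈ G m := by
      intro c
      have hrepr : algebraMap K (GSer Λ K m) c = HahnSeries.single (0 : Fin m → Λ) c := by
        ext γ
        rw [Algebra.algebraMap_eq_smul_one, HahnSeries.coeff_smul,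
          ← HahnSeries.single_zero_one (Γ := Fin m → Λ) (R := K)]
        by_cases hγ : γ = (0 : Fin m → Λ)
        · subst hγ
          rw [HahnSeries.coeff_single_same, HahnSeries.coeff_single_same, smul_eq_mul,
            mul_one]
        · rw [HahnSeries.coeff_single_of_ne hγ, HahnSeries.coeff_single_of_ne hγ,
            smul_zero]
      constructor
      · intro l
        rw [hrepr, single_zero_restrict]
        by_cases h0 : (0 : Fin m → Λ) ∈ boxSet l
        · rw [if_pos h0, ← hrepr]
          exact (genAlgSubalg F m).algebraMap_mem c
        · rw [if_neg h0]
          exact genAlg_zero_mem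
      · intro i
        rw [hrepr, rder_single_zero]
        exact genAlg_zero_mem
    exact ⟨{ carrier := G m, mul_mem' := hmul, add_mem' := hadd,
             algebraMap_mem' := halg }, rfl⟩
  have hGre : ReindexClosed G := by
    intro k m σ f hf h hre
    rw [hre.eq_reindexFun]
    constructor
    · set S : Set (GSer Λ K m) := {y | ∃ b : List (Fin k × Λ),
          y = reindexFun σ (f.restrictSet (boxSet b))} with hSdef
      have hSsub : S ⊆ GenAlg F m := by
        rintro y ⟨b, rfl⟩
        exact genAlg_reindexClosed F k m σ _ (hf.1 b) _ (isReindex_reindexFun σ _)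
      have hS : ∀ y ∈ S, ∀ (i : Fin m) (α : Λ), ∃ L : List (K × GSer Λ K m),
          (∀ p ∈ L, p.2 ∈ S) ∧
          y.restrictSet {γ | γ i < α} = (L.map fun p => p.1 • p.2).sum := by
        rintro y ⟨b, rfl⟩ i α
        obtain ⟨L, hL⟩ := reindexFun_restrict σ (f.restrictSet (boxSet b)) i α
        refine ⟨L.map fun p => (p.1, reindexFun σ (f.restrictSet (boxSet (b ++ p.2)))),
          ?_, ?_⟩
        · intro p hp
          obtain ⟨q, hq, rfl⟩ := List.mem_map.1 hp
          exact ⟨b ++ q.2, rfl⟩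
        · rw [hL, List.map_map]
          refine congrArg List.sum (List.map_congr_left fun p hp => ?_)
          simp only [Function.comp_apply]
          rw [HahnSeries.restrictSet_restrictSet, boxSet_append]
      have hmem : reindexFun σ f ∈ Submodule.span K S := Submodule.subset_span
        ⟨[], by rw [boxSet_nil, HahnSeries.restrictSet_univ]⟩
      intro l
      exact span_subset_genAlg hSsub _ (span_restrict_box_closed hS _ hmem l)
    · intro i
      rw [rder_reindexFun]
      refine genAlg_reindexClosed F k m σ _ ?_ _ (isReindex_reindexFun σ _)
      exact genAlg_finset_sum_mem _ _ fun j _ => hf.2 j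
  have hmain : ∀ m : ℕ, ∀ f ∈ GenAlg F m, f ∈ G m := fun m f hf => hf G hGalg hGre hFG
  refine ⟨genAlg_isSubalgFam F, ?_, ?_, ?_⟩
  · intro m f hf i α
    have hx := (hmain m f hf).1 [(i, α)]
    rw [boxSet_single] at hx
    exact hx
  · intro m i
    exact subset_genAlg F m (hproj m i)
  · intro m f hf i
    exact (hmain m f hf).2 i


end
end
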